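/- arXiv:0911.3830 — 8 statements merged into one kernel-verified Lean document; each statement's English description precedes it below -/
import Mathlib

section
/- Let K be a field, α an automorphism of K with fixed field F, and a₀,…,a_{n-1} elements of K cyclically permuted by α (i.e., α(a_i)=a_{i+1 mod n}). Let V be the n×n Vandermonde matrix with rows (1, a_i, a_i², …, a_i^{n-1}), assumed invertible (the a_i distinct), and let C be the n×n cyclic permutation matrix (C e_i = e_{i+1 mod n} on standard basis columns, i.e., c_{i,i-1}=1 for 2≤i≤n, c_{1,n}=1, zeros elsewhere). Then every entry of V⁻¹CV lies in F. -/
/-- Lemma 2.3: Let K be a field, α an automorphism of K with fixed field F, and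
a₀,…,a_{n-1} elements of K cyclically permuted by α. Let V be the Vandermonde
matrix of the aᵢ (assumed invertible) and C the cyclic permutation matrix.
Then every entry of V⁻¹CV is fixed by α (i.e. lies in F). -/
theorem stmt0 {K : Type*} [Field K] (α : K ≃+* K) {n : ℕ} (hn : 0 < n)
    (a : Fin n → K) (ha : Function.Injective a)
    (hperm : ∀ i : Fin n, α (a i) = a ⟨((i : ℕ) + 1) % n, Nat.mod_lt _ hn⟩)
    (V C : Matrix (Fin n) (Fin n) K)
    (hV : V = Matrix.of fun (i j : Fin n) => a i ^ (j : ℕ))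
    (hVunit : IsUnit V)
    (hC : C = Matrix.of fun (i j : Fin n) => if (i : ℕ) = ((j : ℕ) + 1) % n then (1 : K) else 0) :
    ∀ i j, α ((V⁻¹ * C * V) i j) = (V⁻¹ * C * V) i j := by
  haveI : NeZero n := ⟨hn.ne'⟩
  set σ : Equiv.Perm (Fin n) := Equiv.addRight (1 : Fin n) with hσ
  set P : Matrix (Fin n) (Fin n) K := σ.toPEquiv.toMatrix with hP
  have hadd : ∀ k : Fin n, (⟨((k : ℕ) + 1) % n, Nat.mod_lt _ hn⟩ : Fin n) = k + 1 := by
    intro k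
    ext
    simp [Fin.add_def]
  have hC' : C = σ.symm.toPEquiv.toMatrix := by
    rw [hC]
    ext i k
    simp only [Matrix.of_apply, PEquiv.toMatrix_apply, Equiv.toPEquiv_apply, Option.mem_def,
      Option.some.injEq]
    have : (i : ℕ) = ((k : ℕ) + 1) % n ↔ σ.symm i = k := by
      rw [show ((i : ℕ) = ((k : ℕ) + 1) % n) ↔ (i = (⟨((k : ℕ) + 1) % n, Nat.mod_lt _ hn⟩ : Fin n))
        from ⟨fun h => Fin.ext h, fun h => congrArg Fin.val h⟩, hadd]
      constructor
      · rintro rfl; simp [hσ, Equiv.symm_apply_eq]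
      · rintro rfl; simp [hσ]
    simp [this]
  have hPC : P * C = 1 := by
    rw [hC', hP, ← PEquiv.toMatrix_trans, ← Equiv.toPEquiv_trans]
    simp
  have hCP : C * P = 1 := by
    rw [hC', hP, ← PEquiv.toMatrix_trans, ← Equiv.toPEquiv_trans]
    simp
  -- V.map α = P * V
  have hmap : V.map (α : K →+* K) = P * V := by
    rw [hP, PEquiv.toMatrix_toPEquiv_mul]
    ext i j
    have h := hperm i
    rw [hadd] at h
    simp only [Matrix.map_apply, Matrix.submatrix_apply, id, hV, Matrix.of_apply, map_pow]
    rw [show (⇑(α : K →+* K)) (a i) = α (a i) from rfl, h]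
    rfl
  have hdet : IsUnit V.det := (Matrix.isUnit_iff_isUnit_det V).mp hVunit
  have hVinv : V⁻¹ * V = 1 := Matrix.nonsing_inv_mul V hdet
  have hVinv' : V * V⁻¹ = 1 := Matrix.mul_nonsing_inv V hdet
  -- (V⁻¹).map α = V⁻¹ * C  (since (V.map α)⁻¹ = (P V)⁻¹ = V⁻¹ P⁻¹ = V⁻¹ C)
  have hmapinv : (V⁻¹).map (α : K →+* K) = V⁻¹ * C := by
    have h1 : (V⁻¹).map (α : K →+* K) * (P * V) = 1 := by
      rw [← hmap, ← Matrix.map_mul, hVinv, Matrix.map_one _ (map_zero _) (map_one _)]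
    have hW : (P * V) * (V⁻¹ * C) = 1 := by
      rw [Matrix.mul_assoc P V _, ← Matrix.mul_assoc V V⁻¹ C, hVinv', Matrix.one_mul, hPC]
    calc (V⁻¹).map (α : K →+* K)
        = (V⁻¹).map (α : K →+* K) * ((P * V) * (V⁻¹ * C)) := by
          rw [hW, Matrix.mul_one]
      _ = ((V⁻¹).map (α : K →+* K) * (P * V)) * (V⁻¹ * C) := by rw [← Matrix.mul_assoc]
      _ = V⁻¹ * C := by rw [h1, Matrix.one_mul]
  have hCmap : C.map (α : K →+* K) = C := by
    rw [hC]
    ext i j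
    simp only [Matrix.map_apply, Matrix.of_apply]
    split <;> simp
  intro i j
  have key : (V⁻¹ * C * V).map (α : K →+* K) = V⁻¹ * C * V := by
    rw [Matrix.map_mul, Matrix.map_mul, hmapinv, hCmap, hmap,
      Matrix.mul_assoc (V⁻¹ * C) C (P * V), ← Matrix.mul_assoc C P V, hCP, Matrix.one_mul,
      Matrix.mul_assoc]
  exact congrFun (congrFun key i) j
end

section
/- Let m, n, k be positive integers with k having order n modulo m, let s be a prime with gcd(s,m)=1, and let ζ be a primitive m-th root of unity in the algebraic closure of F_s. If A is the n×n diagonal matrix diag(ζ, ζ^k, …, ζ^{k^{n-1}}) and C is the n×n cyclic shift matrix, and if q is a power of s such that the subgroup generated by q mod m equals the subgroup generated by k mod m, then there exists an invertible n×n matrix V over F̄_s such that both V⁻¹AV and V⁻¹CV have all entries in the subfield F_q. -/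
open Matrix


/-- Lemma 2.4 / realizability direction of Theorem 2.5: if ⟨q mod m⟩ = ⟨k mod m⟩ in
(ℤ/m)ˣ, then the diagonal matrix diag(ζ,ζ^k,…,ζ^{k^{n-1}}) and the cyclic shift matrix
can be simultaneously conjugated into matrices with all entries in the subfield F_q of
F̄_s (i.e. entries fixed by x ↦ x^q). -/
theorem stmt3 (m n k s e q : ℕ) [Fact s.Prime] (hm : 0 < m) (hn : 0 < n)
    (hsm : s.Coprime m) (hk : orderOf ((k : ZMod m)) = n)
    (hq : q = s ^ e) (he : 0 < e)
    (ζ : AlgebraicClosure (ZMod s)) (hζ : IsPrimitiveRoot ζ m)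
    (hsub : Submonoid.powers ((q : ZMod m)) = Submonoid.powers ((k : ZMod m)))
    (A C : Matrix (Fin n) (Fin n) (AlgebraicClosure (ZMod s)))
    (hA : A = Matrix.diagonal fun i : Fin n => ζ ^ k ^ (i : ℕ))
    (hC : C = Matrix.of fun (i j : Fin n) =>
      if (i : ℕ) = ((j : ℕ) + 1) % n then (1 : AlgebraicClosure (ZMod s)) else 0) :
    ∃ V : Matrix (Fin n) (Fin n) (AlgebraicClosure (ZMod s)), IsUnit V ∧
      (∀ i j, ((V⁻¹ * A * V) i j) ^ q = (V⁻¹ * A * V) i j) ∧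
      (∀ i j, ((V⁻¹ * C * V) i j) ^ q = (V⁻¹ * C * V) i j) := by
  obtain ⟨n, rfl⟩ : ∃ n', n = n' + 1 := ⟨n - 1, (Nat.succ_pred_eq_of_pos hn).symm⟩
  -- zeta exponent congruence
  have hζm : ∀ a b : ℕ, (a : ZMod m) = (b : ZMod m) → ζ ^ a = ζ ^ b := by
    intro a b h
    have h' : a % m = b % m := (ZMod.natCast_eq_natCast_iff a b m).mp h
    calc ζ ^ a = ζ ^ (a % m) := by
          conv_lhs => rw [← pow_mod_orderOf, ← hζ.eq_orderOf]
    _ = ζ ^ (b % m) := by rw [h']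
    _ = ζ ^ b := by conv_rhs => rw [← pow_mod_orderOf, ← hζ.eq_orderOf]
  -- q = k^t mod m
  obtain ⟨t, ht⟩ : ∃ t, ((k : ZMod m)) ^ t = ((q : ZMod m)) := by
    have : (q : ZMod m) ∈ Submonoid.powers ((k : ZMod m)) := by
      rw [← hsub]; exact Submonoid.mem_powers _
    exact this
  have hφ : ∀ x : AlgebraicClosure (ZMod s),
      iterateFrobenius (AlgebraicClosure (ZMod s)) s e x = x ^ q := by
    intro x; rw [iterateFrobenius_def, hq]
  set φ := iterateFrobenius (AlgebraicClosure (ZMod s)) s e with hφdef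
  have htlt : t % (n+1) < n + 1 := Nat.mod_lt t (Nat.succ_pos n)
  set τ : Fin (n+1) := ⟨t % (n+1), htlt⟩ with hτdef
  -- core congruence
  have hstep : ∀ i : Fin (n+1), (ζ ^ k ^ (i : ℕ)) ^ q = ζ ^ k ^ ((i + τ : Fin (n+1)) : ℕ) := by
    intro i
    rw [← pow_mul]
    apply hζm
    push_cast
    rw [← ht, ← pow_add]
    conv_lhs => rw [← pow_mod_orderOf, hk]
    conv_rhs => rw [← pow_mod_orderOf, hk]
    congr 1
    rw [Fin.val_add]
    simp [Nat.add_mod, Nat.mod_mod_of_dvd]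
    simp [hτdef]
  -- matrices
  set V : Matrix (Fin (n+1)) (Fin (n+1)) (AlgebraicClosure (ZMod s)) :=
    vandermonde (fun i => ζ ^ k ^ (i : ℕ)) with hVdef
  set P : Matrix (Fin (n+1)) (Fin (n+1)) (AlgebraicClosure (ZMod s)) :=
    Matrix.of (fun i j => if j = i + τ then 1 else 0) with hPdef
  set Q : Matrix (Fin (n+1)) (Fin (n+1)) (AlgebraicClosure (ZMod s)) :=
    Matrix.of (fun i j => if j = i - τ then 1 else 0) with hQdef
  -- product helpers
  have hPmul : ∀ M : Matrix (Fin (n+1)) (Fin (n+1)) (AlgebraicClosure (ZMod s)),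
      P * M = Matrix.of (fun i j => M (i + τ) j) := by
    intro M; ext i j
    simp [hPdef, Matrix.mul_apply]
  have hmulP : ∀ M : Matrix (Fin (n+1)) (Fin (n+1)) (AlgebraicClosure (ZMod s)),
      M * P = Matrix.of (fun i j => M i (j - τ)) := by
    intro M; ext i j
    simp only [hPdef, Matrix.mul_apply, Matrix.of_apply, mul_ite, mul_one, mul_zero]
    rw [Finset.sum_eq_single (j - τ)]
    · simp
    · intro b _ hb
      rw [if_neg]
      intro hcon
      exact hb (by rw [hcon]; exact (add_sub_cancel_right b τ).symm)
    · simp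
  -- C in Fin form
  have hC' : C = Matrix.of (fun i j : Fin (n+1) =>
      if i = j + 1 then (1 : AlgebraicClosure (ZMod s)) else 0) := by
    rw [hC]; ext i j
    simp only [Matrix.of_apply]
    congr 1
    rw [Fin.ext_iff, Fin.val_add, Fin.val_one']
    simp [Nat.add_mod, Nat.mod_mod_of_dvd, Nat.mod_eq_of_lt i.isLt]
  -- key identities
  have hVφ : V.map φ = P * V := by
    rw [hPmul]
    ext i j
    simp only [hVdef, Matrix.map_apply, vandermonde_apply, Matrix.of_apply]
    rw [map_pow, hφ, hstep]
  have hAφP : A.map φ * P = P * A := by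
    rw [hmulP, hPmul, hA]
    ext i j
    simp only [Matrix.of_apply, Matrix.map_apply, Matrix.diagonal_apply]
    by_cases h : i + τ = j
    · rw [if_pos (by rw [← h, add_sub_cancel_right]), if_pos h, hφ]
      exact hstep i
    · rw [if_neg (fun hcon => h (by rw [hcon, sub_add_cancel])), if_neg h]
      exact map_zero φ
  have hCφ : C.map φ = C := by
    rw [hC']; ext i j
    simp [Matrix.map_apply, apply_ite φ, _root_.map_one, map_zero]
  have hPC : P * C = C * P := by
    rw [hPmul, hmulP, hC']
    ext i j
    simp only [Matrix.of_apply]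
    congr 1
    rw [sub_add_eq_add_sub, eq_sub_iff_add_eq]
  have hPQ : P * Q = 1 := by
    rw [hPmul]
    ext i j
    simp [hQdef, Matrix.one_apply, add_sub_cancel_right, eq_comm]
  have hQP : Q * P = 1 := by
    rw [hmulP]
    ext i j
    simp [hQdef, Matrix.one_apply, sub_sub_cancel, eq_comm]
  -- injectivity of the nodes
  have hinj : Function.Injective (fun i : Fin (n+1) => ζ ^ k ^ (i : ℕ)) := by
    intro i j hij
    simp only at hij
    have e1 : ζ ^ (k ^ (i:ℕ) % m) = ζ ^ (k ^ (j:ℕ) % m) := by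
      rw [hζm (k ^ (i:ℕ) % m) (k ^ (i:ℕ)) (by rw [ZMod.natCast_mod]),
          hζm (k ^ (j:ℕ) % m) (k ^ (j:ℕ)) (by rw [ZMod.natCast_mod])]
      exact hij
    have e2 : k ^ (i:ℕ) % m = k ^ (j:ℕ) % m :=
      hζ.pow_inj (Nat.mod_lt _ hm) (Nat.mod_lt _ hm) e1
    have e3 : ((k : ZMod m)) ^ (i:ℕ) = ((k : ZMod m)) ^ (j:ℕ) := by
      have e2' := congrArg (fun a : ℕ => (a : ZMod m)) e2
      simpa [ZMod.natCast_mod] using e2'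
    have hk1 : ((k : ZMod m)) ^ (n+1) = 1 := by rw [← hk]; exact pow_orderOf_eq_one _
    obtain ⟨u, hu'⟩ := IsUnit.of_pow_eq_one hk1 (Nat.succ_ne_zero n)
    have e4 : u ^ (i:ℕ) = u ^ (j:ℕ) := by
      apply Units.ext
      push_cast [hu']
      exact e3
    have e5 : (i:ℕ) ≡ (j:ℕ) [MOD orderOf u] := pow_eq_pow_iff_modEq.mp e4
    have ho : orderOf u = n+1 := by rw [← orderOf_units, hu', hk]
    rw [ho] at e5
    have : (i:ℕ) % (n+1) = (j:ℕ) % (n+1) := e5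
    rw [Nat.mod_eq_of_lt i.isLt, Nat.mod_eq_of_lt j.isLt] at this
    exact Fin.ext this
  have hdet : IsUnit V.det := by
    rw [hVdef, det_vandermonde]
    rw [isUnit_iff_ne_zero]
    apply Finset.prod_ne_zero_iff.mpr
    intro i _
    apply Finset.prod_ne_zero_iff.mpr
    intro j hj
    rw [sub_ne_zero]
    intro hcon
    have : j = i := hinj hcon
    rw [this] at hj
    simp at hj
  have hVunit : IsUnit V := (Matrix.isUnit_iff_isUnit_det V).mpr hdet
  -- inverse facts
  have hVV : V * V⁻¹ = 1 := Matrix.mul_nonsing_inv V hdet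
  have hVmapinv : V⁻¹.map φ = V⁻¹ * Q := by
    have e1 : V.map φ * V⁻¹.map φ = 1 := by
      rw [← Matrix.map_mul, hVV, Matrix.map_one φ (map_zero φ) (_root_.map_one φ)]
    have e2 : V⁻¹.map φ = (V.map φ)⁻¹ := (Matrix.inv_eq_right_inv e1).symm
    rw [e2, hVφ, Matrix.mul_inv_rev, Matrix.inv_eq_right_inv hPQ]
  -- final computations
  have hMA : (V⁻¹ * A * V).map φ = V⁻¹ * A * V := by
    rw [Matrix.map_mul, Matrix.map_mul, hVmapinv, hVφ]
    calc V⁻¹ * Q * A.map φ * (P * V) = V⁻¹ * Q * (A.map φ * P) * V := by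
          simp only [Matrix.mul_assoc]
    _ = V⁻¹ * Q * (P * A) * V := by rw [hAφP]
    _ = V⁻¹ * ((Q * P) * A) * V := by simp only [Matrix.mul_assoc]
    _ = V⁻¹ * A * V := by rw [hQP, one_mul]
  have hMC : (V⁻¹ * C * V).map φ = V⁻¹ * C * V := by
    rw [Matrix.map_mul, Matrix.map_mul, hVmapinv, hVφ, hCφ]
    calc V⁻¹ * Q * C * (P * V) = V⁻¹ * Q * (C * P) * V := by
          simp only [Matrix.mul_assoc]
    _ = V⁻¹ * Q * (P * C) * V := by rw [hPC]
    _ = V⁻¹ * ((Q * P) * C) * V := by simp only [Matrix.mul_assoc]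
    _ = V⁻¹ * C * V := by rw [hQP, one_mul]
  refine ⟨V, hVunit, ?_, ?_⟩
  · intro i j
    have := congrFun (congrFun hMA i) j
    rw [Matrix.map_apply, hφ] at this
    exact this
  · intro i j
    have := congrFun (congrFun hMC i) j
    rw [Matrix.map_apply, hφ] at this
    exact this
end

section
/- Let m, n, k be positive integers with k of order n modulo m, s a prime not dividing m, ζ a primitive m-th root of unity in F̄_s, and q a power of s. If there exist matrices A', C' ∈ GLₙ(F_q) with A' conjugate over F̄_s to diag(ζ, ζ^k, …, ζ^{k^{n-1}}), then q ≡ k^i (mod m) for some 0 ≤ i ≤ n-1. -/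
/-- Necessity direction of Theorem 2.5: if the pair of matrices of the induced
representation is realizable over F_q — in particular if there are invertible matrices
A', C' with entries in F_q (entries fixed by x ↦ x^q) with A' conjugate over F̄_s to
diag(ζ, ζ^k, …, ζ^{k^{n-1}}) — then q ≡ k^i (mod m) for some 0 ≤ i ≤ n-1. -/
theorem stmt4 (m n k s e q : ℕ) [Fact s.Prime] (hm : 0 < m) (hn : 0 < n)
    (hsm : s.Coprime m) (hk : orderOf ((k : ZMod m)) = n)
    (hq : q = s ^ e) (he : 0 < e)
    (ζ : AlgebraicClosure (ZMod s)) (hζ : IsPrimitiveRoot ζ m)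
    (h : ∃ A' C' : Matrix (Fin n) (Fin n) (AlgebraicClosure (ZMod s)),
      IsUnit A' ∧ IsUnit C' ∧
      (∀ i j, (A' i j) ^ q = A' i j) ∧ (∀ i j, (C' i j) ^ q = C' i j) ∧
      ∃ V : Matrix (Fin n) (Fin n) (AlgebraicClosure (ZMod s)), IsUnit V ∧
        V⁻¹ * (Matrix.diagonal fun i : Fin n => ζ ^ k ^ (i : ℕ)) * V = A') :
    ∃ i < n, q ≡ k ^ i [MOD m] := by
  classical
  obtain ⟨A', C', hA, hC, hAq, _, V, hV, hconj⟩ := h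
  set D : Matrix (Fin n) (Fin n) (AlgebraicClosure (ZMod s)) :=
    Matrix.diagonal fun i : Fin n => ζ ^ k ^ (i : ℕ) with hD
  let φ : AlgebraicClosure (ZMod s) →+* AlgebraicClosure (ZMod s) := iterateFrobenius _ s e
  have hφ : ∀ x : AlgebraicClosure (ZMod s), φ x = x ^ q := fun x => by rw [hq]; rfl
  have hVdet : IsUnit V.det := (Matrix.isUnit_iff_isUnit_det V).mp hV
  have key : ∀ x : AlgebraicClosure (ZMod s),
      (A' - Matrix.scalar (Fin n) x).det = (D - Matrix.scalar (Fin n) x).det := by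
    intro x
    have h1 : A' - Matrix.scalar (Fin n) x = V⁻¹ * (D - Matrix.scalar (Fin n) x) * V := by
      rw [Matrix.mul_sub, Matrix.sub_mul, hconj]
      congr 1
      rw [Matrix.mul_assoc, Matrix.scalar_commute x (fun r => Commute.all x r) V,
        ← Matrix.mul_assoc, Matrix.nonsing_inv_mul _ hVdet, Matrix.one_mul]
    rw [h1, Matrix.det_conj' hV]
  have hDdet : ∀ x : AlgebraicClosure (ZMod s),
      (D - Matrix.scalar (Fin n) x).det = ∏ i : Fin n, (ζ ^ k ^ (i : ℕ) - x) := by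
    intro x
    have h2 : D - Matrix.scalar (Fin n) x
        = Matrix.diagonal fun i : Fin n => ζ ^ k ^ (i : ℕ) - x := by
      rw [hD, ← Matrix.diagonal_sub]
      congr 1
    rw [h2, Matrix.det_diagonal]
  have hroot : (A' - Matrix.scalar (Fin n) ζ).det = 0 := by
    rw [key, hDdet]
    refine Finset.prod_eq_zero (Finset.mem_univ (⟨0, hn⟩ : Fin n)) ?_
    simp
  have hmap : (φ.mapMatrix (A' - Matrix.scalar (Fin n) ζ))
      = A' - Matrix.scalar (Fin n) (ζ ^ q) := by
    ext i j
    simp only [RingHom.mapMatrix_apply, Matrix.map_apply, Matrix.sub_apply, map_sub,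
      Matrix.scalar_apply, Matrix.diagonal_apply]
    have hq0 : q ≠ 0 := by rw [hq]; exact pow_ne_zero _ (Fact.out (p := s.Prime)).pos.ne'
    split_ifs <;> simp [hφ, hAq, hq0]
  have hrootq : (A' - Matrix.scalar (Fin n) (ζ ^ q)).det = 0 := by
    rw [← hmap, ← RingHom.map_det, hroot, map_zero]
  rw [key, hDdet] at hrootq
  obtain ⟨i, -, hi⟩ := Finset.prod_eq_zero_iff.mp hrootq
  refine ⟨(i : ℕ), i.isLt, ?_⟩
  have heq : ζ ^ q = ζ ^ k ^ (i : ℕ) := (sub_eq_zero.mp hi).symm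
  have hred : ∀ t : ℕ, (ζ : AlgebraicClosure (ZMod s)) ^ t = ζ ^ (t % m) := by
    intro t
    conv_lhs => rw [← Nat.div_add_mod t m]
    rw [pow_add, pow_mul, hζ.pow_eq_one, one_pow, one_mul]
  have heq' : ζ ^ (q % m) = ζ ^ (k ^ (i : ℕ) % m) := by
    rw [← hred, ← hred, heq]
  exact hζ.pow_inj (Nat.mod_lt _ hm) (Nat.mod_lt _ hm) heq'
end

section
/- With G, F, ζ as above, suppose the order t of k modulo m is a proper divisor of n, write n = t·r, and suppose r is invertible in F and F contains a primitive r-th root of unity η. Then the n-dimensional induced representation V decomposes as a direct sum of r pairwise non-isomorphic irreducible t-dimensional subrepresentations W₀,…,W_{r-1}, where on W_i the generator a acts by diag(ζ, ζ^k, …, ζ^{k^{t-1}}) and b acts by the t×t cyclic shift matrix with top-right corner entry η^{-i}. -/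
private lemma aux_pow_inj {M : Type*} [Monoid M] (a : M) {t : ℕ} (h : orderOf a = t)
    {j j' : ℕ} (hj : j < t) (hj' : j' < t) (he : a ^ j = a ^ j') : j = j' := by
  have h1 : a ^ t = 1 := h ▸ pow_orderOf_eq_one a
  have key : ∀ x y : ℕ, x < y → y < t → a ^ x ≠ a ^ y := by
    intro x y hxy hyt hxyeq
    have h2 : a ^ (x + (t - y)) = 1 := by
      rw [pow_add, hxyeq, ← pow_add, Nat.add_sub_cancel' hyt.le, h1]
    have h3 := orderOf_dvd_of_pow_eq_one h2
    rw [h] at h3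
    have := Nat.le_of_dvd (by omega) h3
    omega
  rcases Nat.lt_trichotomy j j' with h' | h' | h'
  · exact absurd he (key _ _ h' hj')
  · exact h'
  · exact absurd he.symm (key _ _ h' hj)

private lemma aux_coe_sub_one {n : ℕ} [NeZero n] (p : Fin n) :
    ((p - 1 : Fin n) : ℕ) = if (p : ℕ) = 0 then n - 1 else (p : ℕ) - 1 := by
  cases n with
  | zero => exact absurd rfl (NeZero.ne 0)
  | succ n' =>
    rw [Fin.coe_sub_one]
    by_cases h : (p : ℕ) = 0
    · have hp : p = 0 := Fin.ext h
      rw [if_pos hp, if_pos h]; omega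
    · have hp : p ≠ 0 := fun e => h (by rw [e]; rfl)
      rw [if_neg hp, if_neg h]

private lemma aux_pred_mod {t p : ℕ} (ht : 0 < t) (hp : p % t ≠ 0) :
    (p - 1) % t = p % t - 1 ∧ (p - 1) / t = p / t := by
  have h0 := Nat.div_add_mod p t
  have h1 : p % t < t := Nat.mod_lt _ ht
  have h2 : p - 1 = t * (p / t) + (p % t - 1) := by omega
  rw [h2, Nat.mul_add_mod, Nat.mul_add_div ht,
    Nat.mod_eq_of_lt (show p % t - 1 < t by omega),
    Nat.div_eq_of_lt (show p % t - 1 < t by omega)]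
  omega

private lemma aux_pred_mod0 {t p : ℕ} (ht : 0 < t) (hp : p % t = 0) (hp0 : p ≠ 0) :
    (p - 1) % t = t - 1 ∧ (p - 1) / t = p / t - 1 := by
  have h0 := Nat.div_add_mod p t
  obtain ⟨d', hd⟩ : ∃ d', p / t = d' + 1 := by
    rcases Nat.eq_zero_or_pos (p / t) with h | h
    · rw [h, Nat.mul_zero] at h0; omega
    · exact ⟨p / t - 1, by omega⟩
  have h2 : p - 1 = t * d' + (t - 1) := by rw [hd, Nat.mul_succ] at h0; omega
  rw [h2, Nat.mul_add_mod, Nat.mul_add_div ht,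
    Nat.mod_eq_of_lt (show t - 1 < t by omega),
    Nat.div_eq_of_lt (show t - 1 < t by omega), hd]
  omega

private lemma aux_last {t r : ℕ} (ht : 0 < t) (hr : 0 < r) :
    (t * r - 1) % t = t - 1 ∧ (t * r - 1) / t = r - 1 := by
  obtain ⟨r', rfl⟩ : ∃ r', r = r' + 1 := ⟨r - 1, by omega⟩
  have h2 : t * (r' + 1) - 1 = t * r' + (t - 1) := by rw [Nat.mul_succ]; omega
  rw [h2, Nat.mul_add_mod, Nat.mul_add_div ht,
    Nat.mod_eq_of_lt (show t - 1 < t by omega),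
    Nat.div_eq_of_lt (show t - 1 < t by omega)]
  omega

private lemma aux_mul (a r : ℕ) (hr : 0 < r) : a * (r - 1) + a = r * a := by
  obtain ⟨r', rfl⟩ : ∃ r', r = r' + 1 := ⟨r - 1, by omega⟩
  simp [Nat.mul_succ, Nat.succ_mul]
  ring

private lemma aux_geom {F : Type*} [Field F] {r : ℕ} (_hr : r ≠ 0) {η : F}
    (hη : IsPrimitiveRoot η r) (d : ℕ) :
    ∑ i : Fin r, η ^ ((i : ℕ) * d) = if r ∣ d then (r : F) else 0 := by
  have hcalc : ∀ i : Fin r, η ^ ((i : ℕ) * d) = (η ^ d) ^ (i : ℕ) := by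
    intro i; rw [← pow_mul, Nat.mul_comm]
  simp only [hcalc]
  rw [Fin.sum_univ_eq_sum_range (fun i => (η ^ d) ^ i) r]
  by_cases hdvd : r ∣ d
  · rw [if_pos hdvd]
    have h1 : η ^ d = 1 := by
      obtain ⟨c, rfl⟩ := hdvd
      rw [pow_mul, hη.pow_eq_one, one_pow]
    simp [h1]
  · rw [if_neg hdvd]
    have h1 : η ^ d ≠ 1 := fun h => hdvd ((hη.pow_eq_one_iff_dvd d).mp h)
    rw [geom_sum_eq h1]
    have h2 : (η ^ d) ^ r = 1 := by
      rw [← pow_mul, mul_comm, pow_mul, hη.pow_eq_one, one_pow]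
    rw [h2, sub_self, zero_div]

/-- Proposition 2.1(2): if the order t of k mod m is a proper divisor of n = t·r,
r is invertible in F and η ∈ F is a primitive r-th root of unity, then the induced
representation (a acting by diag(ζ^{k^i}), b by the cyclic shift on Fin n → F)
decomposes as a direct sum of the r subrepresentations W_i spanned by the vectors
v_{ij} = Σ_ℓ η^{iℓ} e_{j+ℓt}; each W_i is G-invariant and irreducible, on W_i the
generator a acts by diag(ζ,ζ^k,…,ζ^{k^{t-1}}) and b by the cyclic shift with corner
entry η^{-i}, and the W_i are pairwise non-isomorphic as representations. -/
theorem stmt6 {F : Type*} [Field F] [IsAlgClosed F] (m n t r k : ℕ)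
    [NeZero n] [NeZero t] [NeZero r]
    (hm : 0 < m) (hn : n = t * r) (htn : t ≠ n) (hr : (r : F) ≠ 0)
    (ζ η : F) (hζ : IsPrimitiveRoot ζ m) (hη : IsPrimitiveRoot η r)
    (hk : orderOf ((k : ZMod m)) = t)
    (A B : (Fin n → F) →ₗ[F] (Fin n → F))
    (hA : ∀ v i, A v i = ζ ^ k ^ (i : ℕ) * v i)
    (hB : ∀ v i, B v i = v (i - 1))
    (v : Fin r → Fin t → (Fin n → F))
    (hv : ∀ i j, v i j = ∑ ℓ : Fin r, η ^ ((i : ℕ) * (ℓ : ℕ)) •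
      (Pi.single (⟨((j : ℕ) + (ℓ : ℕ) * t) % n,
        Nat.mod_lt _ (Nat.pos_of_ne_zero (NeZero.ne n))⟩ : Fin n) (1 : F) : Fin n → F))
    (W : Fin r → Submodule F (Fin n → F))
    (hW : ∀ i, W i = Submodule.span F (Set.range (v i))) :
    (iSup W = ⊤) ∧ (iSupIndep W) ∧
    (∀ i, LinearIndependent F (v i)) ∧
    (∀ i, ∀ x ∈ W i, A x ∈ W i ∧ B x ∈ W i) ∧
    (∀ i j, A (v i j) = ζ ^ k ^ (j : ℕ) • v i j) ∧
    (∀ i, ∀ j : Fin t, ∀ hj : (j : ℕ) + 1 < t, B (v i j) =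
      v i ⟨(j : ℕ) + 1, hj⟩) ∧
    (∀ i, B (v i ⟨t - 1, Nat.sub_lt (Nat.pos_of_ne_zero (NeZero.ne t)) one_pos⟩) =
      (η ^ (i : ℕ))⁻¹ • v i ⟨0, Nat.pos_of_ne_zero (NeZero.ne t)⟩) ∧
    (∀ i, ∀ U ≤ W i, (∀ x ∈ U, A x ∈ U) → (∀ x ∈ U, B x ∈ U) → U = ⊥ ∨ U = W i) ∧
    (∀ i j, i ≠ j → ¬ ∃ f : (Fin n → F) →ₗ[F] (Fin n → F),
      Submodule.map f (W i) = W j ∧ (∀ x ∈ W i, f x = 0 → x = 0) ∧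
      (∀ x ∈ W i, f (A x) = A (f x) ∧ f (B x) = B (f x))) := by
  classical
  have hn0 : 0 < n := Nat.pos_of_ne_zero (NeZero.ne n)
  have ht0 : 0 < t := Nat.pos_of_ne_zero (NeZero.ne t)
  have hr0 : 0 < r := Nat.pos_of_ne_zero (NeZero.ne r)
  have hη0 : η ≠ 0 := by
    intro h
    have h1 := hη.pow_eq_one
    rw [h, zero_pow (NeZero.ne r)] at h1
    exact zero_ne_one h1
  have hlt : ∀ (j : Fin t) (ℓ : Fin r), (j : ℕ) + (ℓ : ℕ) * t < n := by
    intro j ℓ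
    have h1 : (j : ℕ) < t := j.isLt
    have h2 : (ℓ : ℕ) < r := ℓ.isLt
    calc (j : ℕ) + (ℓ : ℕ) * t < t + (ℓ : ℕ) * t := by omega
      _ = ((ℓ : ℕ) + 1) * t := by ring
      _ ≤ r * t := Nat.mul_le_mul_right t (by omega)
      _ = n := by rw [hn, Nat.mul_comm]
  have hv' : ∀ i j (p : Fin n), v i j p =
      if (p : ℕ) % t = (j : ℕ) then η ^ ((i : ℕ) * ((p : ℕ) / t)) else 0 := by
    intro i j p
    have step : v i j p = ∑ ℓ : Fin r,
        if (p : ℕ) = (j : ℕ) + (ℓ : ℕ) * t then η ^ ((i : ℕ) * (ℓ : ℕ)) else 0 := by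
      rw [hv, Finset.sum_apply]
      refine Finset.sum_congr rfl fun ℓ _ => ?_
      rw [Pi.smul_apply, Pi.single_apply, smul_eq_mul, mul_ite, mul_one, mul_zero]
      simp [Fin.ext_iff, Nat.mod_eq_of_lt (hlt j ℓ)]
    rw [step]
    by_cases hc : (p : ℕ) % t = (j : ℕ)
    · rw [if_pos hc]
      have hdiv : (p : ℕ) / t < r := by
        have h1 : (p : ℕ) < t * r := hn ▸ p.isLt
        rw [Nat.mul_comm] at h1
        exact Nat.div_lt_iff_lt_mul ht0 |>.mpr h1
      rw [Finset.sum_eq_single (⟨(p : ℕ) / t, hdiv⟩ : Fin r)]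
      · have heq : (j : ℕ) + (p : ℕ) / t * t = (p : ℕ) := by
          rw [← hc, Nat.mul_comm]; exact Nat.mod_add_div _ _
        rw [if_pos heq.symm]
      · intro ℓ _ hne
        rw [if_neg]
        intro heq
        apply hne
        apply Fin.ext
        show (ℓ : ℕ) = (p : ℕ) / t
        rw [heq, Nat.add_mul_div_right _ _ ht0, Nat.div_eq_of_lt j.isLt, Nat.zero_add]
      · intro h; exact absurd (Finset.mem_univ _) h
    · rw [if_neg hc]
      apply Finset.sum_eq_zero
      intro ℓ _
      rw [if_neg]
      intro heq
      apply hc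
      rw [heq, Nat.add_mul_mod_self_right, Nat.mod_eq_of_lt j.isLt]
  -- eigenvalue facts
  have hzmodζ : ∀ a : ℕ, ζ ^ a = ζ ^ (a % m) := by
    intro a
    conv_lhs => rw [← Nat.div_add_mod a m]
    rw [pow_add, pow_mul, hζ.pow_eq_one, one_pow, one_mul]
  have hζk : ∀ p : ℕ, ζ ^ k ^ p = ζ ^ k ^ (p % t) := by
    intro p
    have h1 : ((k : ZMod m)) ^ t = 1 := by rw [← hk]; exact pow_orderOf_eq_one _
    have h2 : ((k ^ p : ℕ) : ZMod m) = ((k ^ (p % t) : ℕ) : ZMod m) := by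
      push_cast
      conv_lhs => rw [← Nat.div_add_mod p t]
      rw [pow_add, pow_mul, h1, one_pow, one_mul]
    have h3 : k ^ p % m = k ^ (p % t) % m := by
      rwa [ZMod.natCast_eq_natCast_iff'] at h2
    rw [hzmodζ, h3, ← hzmodζ]
  have hdist : ∀ (j j' : Fin t), ζ ^ k ^ (j : ℕ) = ζ ^ k ^ (j' : ℕ) → j = j' := by
    intro j j' he
    have h3 : k ^ (j : ℕ) % m = k ^ (j' : ℕ) % m := by
      rw [hzmodζ (k ^ (j : ℕ)), hzmodζ (k ^ (j' : ℕ))] at he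
      exact hζ.pow_inj (Nat.mod_lt _ hm) (Nat.mod_lt _ hm) he
    have h4 : ((k : ZMod m)) ^ (j : ℕ) = ((k : ZMod m)) ^ (j' : ℕ) := by
      have h5 : ((k ^ (j : ℕ) : ℕ) : ZMod m) = ((k ^ (j' : ℕ) : ℕ) : ZMod m) := by
        rw [ZMod.natCast_eq_natCast_iff']; exact h3
      push_cast at h5; exact h5
    exact Fin.ext (aux_pow_inj _ hk j.isLt j'.isLt h4)
  have c5 : ∀ i j, A (v i j) = ζ ^ k ^ (j : ℕ) • v i j := by
    intro i j
    funext p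
    rw [hA, Pi.smul_apply, smul_eq_mul, hv' i j p]
    by_cases hc : (p : ℕ) % t = (j : ℕ)
    · rw [if_pos hc]
      have h1 : ζ ^ k ^ (p : ℕ) = ζ ^ k ^ (j : ℕ) := by rw [hζk (p : ℕ), hc]
      rw [h1]
    · rw [if_neg hc, mul_zero, mul_zero]
  have hnm1 : (n - 1) % t = t - 1 := by rw [hn]; exact (aux_last ht0 hr0).1
  have hnd1 : (n - 1) / t = r - 1 := by rw [hn]; exact (aux_last ht0 hr0).2
  have c6 : ∀ i, ∀ j : Fin t, ∀ hj : (j : ℕ) + 1 < t, B (v i j) = v i ⟨(j : ℕ) + 1, hj⟩ := by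
    intro i j hj
    funext p
    rw [hB, hv' i j (p - 1), hv' i ⟨(j : ℕ) + 1, hj⟩ p]
    rw [aux_coe_sub_one p]
    show (if ((if (p : ℕ) = 0 then n - 1 else (p : ℕ) - 1)) % t = (j : ℕ) then
        η ^ ((i : ℕ) * ((if (p : ℕ) = 0 then n - 1 else (p : ℕ) - 1) / t)) else 0) =
      if (p : ℕ) % t = (j : ℕ) + 1 then η ^ ((i : ℕ) * ((p : ℕ) / t)) else 0
    by_cases hp0 : (p : ℕ) = 0
    · have hpt0 : (p : ℕ) % t = 0 := by rw [hp0]; simp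
      simp only [if_pos hp0]
      rw [if_neg (by omega), if_neg (by omega)]
    · simp only [if_neg hp0]
      by_cases hpt : (p : ℕ) % t = (j : ℕ) + 1
      · have hne0 : (p : ℕ) % t ≠ 0 := by omega
        obtain ⟨hm1, hd1⟩ := aux_pred_mod ht0 hne0
        rw [if_pos (by omega), if_pos hpt, hd1]
      · have hno : ¬ ((p : ℕ) - 1) % t = (j : ℕ) := by
          intro hcon
          by_cases hz : (p : ℕ) % t = 0
          · obtain ⟨hm1, _⟩ := aux_pred_mod0 ht0 hz hp0
            omega
          · obtain ⟨hm1, _⟩ := aux_pred_mod ht0 hz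
            have hzz : (p : ℕ) % t ≠ 0 := hz
            omega
        rw [if_neg hno, if_neg hpt]
  have c7 : ∀ i, B (v i ⟨t - 1, Nat.sub_lt (Nat.pos_of_ne_zero (NeZero.ne t)) one_pos⟩) =
      (η ^ (i : ℕ))⁻¹ • v i ⟨0, Nat.pos_of_ne_zero (NeZero.ne t)⟩ := by
    intro i
    funext p
    rw [hB, Pi.smul_apply, smul_eq_mul,
      hv' i ⟨t - 1, Nat.sub_lt (Nat.pos_of_ne_zero (NeZero.ne t)) one_pos⟩ (p - 1),
      hv' i ⟨0, Nat.pos_of_ne_zero (NeZero.ne t)⟩ p, aux_coe_sub_one p]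
    show (if ((if (p : ℕ) = 0 then n - 1 else (p : ℕ) - 1)) % t = t - 1 then
        η ^ ((i : ℕ) * ((if (p : ℕ) = 0 then n - 1 else (p : ℕ) - 1) / t)) else 0) =
      (η ^ (i : ℕ))⁻¹ *
        (if (p : ℕ) % t = 0 then η ^ ((i : ℕ) * ((p : ℕ) / t)) else 0)
    have hinv : ∀ a b : ℕ, a + 1 = b →
        (η ^ (i : ℕ))⁻¹ * η ^ ((i : ℕ) * b) = η ^ ((i : ℕ) * a) := by
      intro a b hab
      subst hab
      rw [Nat.mul_succ, pow_add, ← mul_assoc, mul_comm ((η : F) ^ (i : ℕ))⁻¹,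
        mul_assoc, inv_mul_cancel₀ (pow_ne_zero _ hη0)]
      · ring
    by_cases hp0 : (p : ℕ) = 0
    · have hpt0 : (p : ℕ) % t = 0 := by rw [hp0]; simp
      have hpd0 : (p : ℕ) / t = 0 := by rw [hp0]; simp
      simp only [if_pos hp0]
      rw [if_pos (by omega), if_pos hpt0, hnd1, hpd0]
      have h1 : η ^ ((i : ℕ) * (r - 1)) * η ^ (i : ℕ) = 1 := by
        obtain ⟨r', hr'⟩ : ∃ r', r = r' + 1 := ⟨r - 1, by omega⟩
        rw [← pow_add]
        have h2 : (i : ℕ) * (r - 1) + (i : ℕ) = (i : ℕ) * r := by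
          rw [← Nat.mul_succ]
          congr 1
          omega
        rw [h2, Nat.mul_comm, pow_mul, hη.pow_eq_one, one_pow]
      rw [eq_comm, Nat.mul_zero, pow_zero, mul_one]
      exact inv_eq_of_mul_eq_one_right (by rw [mul_comm]; exact h1)
    · simp only [if_neg hp0]
      by_cases hz : (p : ℕ) % t = 0
      · obtain ⟨hm1, hd1⟩ := aux_pred_mod0 ht0 hz hp0
        rw [if_pos (by omega), if_pos hz, hd1]
        have hdge : 1 ≤ (p : ℕ) / t := by
          have h0 := Nat.div_add_mod (p : ℕ) t
          rcases Nat.eq_zero_or_pos ((p : ℕ) / t) with h | h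
          · rw [h, Nat.mul_zero] at h0; omega
          · exact h
        exact (hinv ((p : ℕ) / t - 1) ((p : ℕ) / t) (by omega)).symm
      · obtain ⟨hm1, _⟩ := aux_pred_mod ht0 hz
        have hzz : (p : ℕ) % t ≠ 0 := hz
        have h1 : (p : ℕ) % t < t := Nat.mod_lt _ ht0
        rw [if_neg (by omega), if_neg hz, mul_zero]
  have c4 : ∀ i, ∀ x ∈ W i, A x ∈ W i ∧ B x ∈ W i := by
    intro i x hx
    constructor
    · have hle : W i ≤ Submodule.comap A (W i) := by
        conv_lhs => rw [hW]
        rw [Submodule.span_le]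
        rintro _ ⟨j, rfl⟩
        simp only [SetLike.mem_coe, Submodule.mem_comap]
        rw [c5]
        exact Submodule.smul_mem _ _ (by rw [hW]; exact Submodule.subset_span ⟨j, rfl⟩)
      exact hle hx
    · have hle : W i ≤ Submodule.comap B (W i) := by
        conv_lhs => rw [hW]
        rw [Submodule.span_le]
        rintro _ ⟨j, rfl⟩
        simp only [SetLike.mem_coe, Submodule.mem_comap]
        by_cases hj : (j : ℕ) + 1 < t
        · rw [c6 i j hj]
          rw [hW]; exact Submodule.subset_span ⟨_, rfl⟩
        · have hjt : j = ⟨t - 1, Nat.sub_lt (Nat.pos_of_ne_zero (NeZero.ne t)) one_pos⟩ := by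
            apply Fin.ext
            have := j.isLt
            show (j : ℕ) = t - 1
            omega
          rw [hjt, c7 i]
          refine Submodule.smul_mem _ _ ?_
          rw [hW]; exact Submodule.subset_span ⟨_, rfl⟩
      exact hle hx
  have hdivlt : ∀ q : Fin n, (q : ℕ) / t < r := by
    intro q
    have h1 : (q : ℕ) < t * r := hn ▸ q.isLt
    rw [Nat.mul_comm] at h1
    exact Nat.div_lt_iff_lt_mul ht0 |>.mpr h1
  have hsingle : ∀ p : Fin n, (r : F) • (Pi.single p (1 : F) : Fin n → F) =
      ∑ i : Fin r, η ^ ((i : ℕ) * (((p : ℕ) / t) * (r - 1))) •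
        v i ⟨(p : ℕ) % t, Nat.mod_lt _ ht0⟩ := by
    intro p
    funext q
    rw [Finset.sum_apply, Pi.smul_apply, Pi.single_apply, smul_eq_mul, mul_ite, mul_one, mul_zero]
    have hterm : ∀ i : Fin r, (η ^ ((i : ℕ) * (((p : ℕ) / t) * (r - 1))) •
        v i ⟨(p : ℕ) % t, Nat.mod_lt _ ht0⟩) q =
        if (q : ℕ) % t = (p : ℕ) % t then
          η ^ ((i : ℕ) * (((p : ℕ) / t) * (r - 1) + (q : ℕ) / t)) else 0 := by
      intro i
      rw [Pi.smul_apply, hv', smul_eq_mul]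
      have hmk : ((⟨(p : ℕ) % t, Nat.mod_lt _ ht0⟩ : Fin t) : ℕ) = (p : ℕ) % t := rfl
      rw [hmk, mul_ite, mul_zero, ← pow_add, ← Nat.mul_add]
    simp only [hterm]
    by_cases hqt : (q : ℕ) % t = (p : ℕ) % t
    · simp only [if_pos hqt]
      rw [aux_geom (NeZero.ne r) hη]
      by_cases hqd : (q : ℕ) / t = (p : ℕ) / t
      · have hqp : q = p := by
          apply Fin.ext
          have h1 := Nat.div_add_mod (q : ℕ) t
          have h2 := Nat.div_add_mod (p : ℕ) t
          rw [hqd, hqt] at h1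
          omega
        rw [if_pos hqp, if_pos]
        refine ⟨(p : ℕ) / t, ?_⟩
        rw [hqd]
        exact aux_mul _ _ hr0
      · have hqp : q ≠ p := fun h => hqd (by rw [h])
        rw [if_neg hqp, if_neg]
        intro hdvd
        apply hqd
        obtain ⟨c, hc⟩ := hdvd
        have h1 := aux_mul ((p : ℕ) / t) r hr0
        have h2 : r * c + (p : ℕ) / t = r * ((p : ℕ) / t) + (q : ℕ) / t := by omega
        have h4 : ((p : ℕ) / t) % r = ((q : ℕ) / t) % r := by
          rw [← Nat.mul_add_mod r c ((p : ℕ) / t), h2, Nat.mul_add_mod]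
        rw [Nat.mod_eq_of_lt (hdivlt p), Nat.mod_eq_of_lt (hdivlt q)] at h4
        exact h4.symm
    · have hqp : q ≠ p := fun h => hqt (by rw [h])
      simp only [if_neg hqt]
      rw [if_neg hqp, Finset.sum_const_zero]
  set u : Fin r × Fin t → (Fin n → F) := fun q => v q.1 q.2 with hu
  have hmemu : ∀ i j, v i j ∈ Submodule.span F (Set.range u) :=
    fun i j => Submodule.subset_span ⟨(i, j), rfl⟩
  have hmem_single : ∀ p : Fin n, Pi.single p (1 : F) ∈ Submodule.span F (Set.range u) := by
    intro p
    have h1 : (r : F) • (Pi.single p (1 : F) : Fin n → F) ∈ Submodule.span F (Set.range u) := by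
      rw [hsingle p]
      exact Submodule.sum_mem _ (fun i _ => Submodule.smul_mem _ _ (hmemu i _))
    have h2 := Submodule.smul_mem _ (r : F)⁻¹ h1
    rwa [smul_smul, inv_mul_cancel₀ hr, one_smul] at h2
  have htop : ⊤ ≤ Submodule.span F (Set.range u) := by
    intro x _
    have hx : x = ∑ p : Fin n, x p • (Pi.single p (1 : F) : Fin n → F) := by
      funext q
      rw [Finset.sum_apply, Finset.sum_eq_single q]
      · rw [Pi.smul_apply, Pi.single_eq_same, smul_eq_mul, mul_one]
      · intro b _ hb
        rw [Pi.smul_apply, Pi.single_eq_of_ne (Ne.symm hb), smul_zero]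
      · intro h; exact absurd (Finset.mem_univ q) h
    rw [hx]
    exact Submodule.sum_mem _ fun p _ => Submodule.smul_mem _ _ (hmem_single p)
  have hrange : Set.range u = ⋃ i, Set.range (v i) := by
    ext y
    constructor
    · rintro ⟨⟨i, j⟩, rfl⟩
      exact Set.mem_iUnion.mpr ⟨i, ⟨j, rfl⟩⟩
    · intro hy
      obtain ⟨i, hi⟩ := Set.mem_iUnion.mp hy
      obtain ⟨j, rfl⟩ := hi
      exact ⟨(i, j), rfl⟩
  have hWu : iSup W = Submodule.span F (Set.range u) := by
    have hWe : W = fun i => Submodule.span F (Set.range (v i)) := funext hW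
    rw [hWe, hrange, Submodule.span_iUnion]
  have c1 : iSup W = ⊤ := by
    rw [hWu]
    exact top_unique htop
  have hcard : Fintype.card (Fin r × Fin t) = Module.finrank F (Fin n → F) := by
    rw [Module.finrank_fin_fun, Fintype.card_prod, Fintype.card_fin, Fintype.card_fin, hn,
      Nat.mul_comm]
  have hu_li : LinearIndependent F u :=
    linearIndependent_of_top_le_span_of_card_eq_finrank htop hcard
  have c3 : ∀ i, LinearIndependent F (v i) := by
    intro i
    have hinj : Function.Injective (fun j : Fin t => ((i, j) : Fin r × Fin t)) := by
      intro a b hab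
      exact (Prod.ext_iff.mp hab).2
    exact hu_li.comp _ hinj
  let b : Module.Basis (Fin r × Fin t) F (Fin n → F) := Module.Basis.mk hu_li htop
  have hb : ∀ q : Fin r × Fin t, b q = u q := fun q => Module.Basis.mk_apply hu_li htop q
  have hcoord : ∀ (i : Fin r) (x : Fin n → F), x ∈ W i →
      ∀ q : Fin r × Fin t, q.1 ≠ i → b.repr x q = 0 := by
    intro i x hx q hq
    rw [hW] at hx
    induction hx using Submodule.span_induction with
    | mem y hy =>
      obtain ⟨j, rfl⟩ := hy
      have h1 : v i j = b (i, j) := (hb (i, j)).symm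
      rw [h1, Module.Basis.repr_self, Finsupp.single_apply]
      rw [if_neg]
      intro hcon
      exact hq (by rw [← hcon])
    | zero => simp
    | add y z hy hz ihy ihz => rw [map_add, Finsupp.add_apply, ihy, ihz, add_zero]
    | smul a y hy ihy => rw [map_smul, Finsupp.smul_apply, ihy, smul_zero]
  have c2 : iSupIndep W := by
    rw [iSupIndep_def]
    intro i
    rw [Submodule.disjoint_def]
    intro x hxi hxs
    set Z : Submodule F (Fin n → F) :=
      ⨅ q : {q : Fin r × Fin t // q.1 = i},
        LinearMap.ker ((Finsupp.lapply (q : Fin r × Fin t)).comp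
          (b.repr : (Fin n → F) →ₗ[F] (Fin r × Fin t) →₀ F)) with hZ
    have hmemZ : ∀ y : Fin n → F, y ∈ Z ↔ ∀ q : Fin r × Fin t, q.1 = i → b.repr y q = 0 := by
      intro y
      rw [hZ]
      simp only [Submodule.mem_iInf, LinearMap.mem_ker, LinearMap.comp_apply,
        Finsupp.lapply_apply, LinearEquiv.coe_coe, Subtype.forall]
    have hle : (⨆ j, ⨆ (_ : j ≠ i), W j) ≤ Z := by
      refine iSup_le fun j => iSup_le fun hj => ?_
      intro y hy
      rw [hmemZ]
      intro q hq
      exact hcoord j y hy q (by rw [hq]; exact fun h => hj h.symm)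
    have hxZ := hle hxs
    rw [hmemZ] at hxZ
    have hzero : b.repr x = 0 := by
      ext q
      by_cases hq : q.1 = i
      · rw [hxZ q hq]; rfl
      · rw [hcoord i x hxi q hq]; rfl
    exact b.repr.map_eq_zero_iff.mp hzero
  have c8 : ∀ i, ∀ U ≤ W i, (∀ x ∈ U, A x ∈ U) → (∀ x ∈ U, B x ∈ U) →
      U = ⊥ ∨ U = W i := by
    intro i U hUW hUA hUB
    by_cases hbot : U = ⊥
    · exact Or.inl hbot
    right
    obtain ⟨x, hxU, hx0⟩ := (Submodule.ne_bot_iff U).mp hbot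
    have hxW : x ∈ Submodule.span F (Set.range (v i)) := by
      rw [← hW]; exact hUW hxU
    obtain ⟨c, hc⟩ := (Submodule.mem_span_range_iff_exists_fun F).mp hxW
    have hsupp : ∃ s, c s ≠ 0 := by
      by_contra hall
      push_neg at hall
      apply hx0
      rw [← hc]
      exact Finset.sum_eq_zero fun j _ => by rw [hall j, zero_smul]
    obtain ⟨s, hcs⟩ := hsupp
    have claim : ∀ N : ℕ, ∀ c : Fin t → F,
        (Finset.filter (fun j => c j ≠ 0) Finset.univ).card ≤ N →
        (∑ j, c j • v i j) ∈ U → ∀ s, c s ≠ 0 → v i s ∈ U := by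
      intro N
      induction N with
      | zero =>
        intro c hcard _ s hs
        have h1 : s ∈ Finset.filter (fun j => c j ≠ 0) Finset.univ :=
          Finset.mem_filter.mpr ⟨Finset.mem_univ s, hs⟩
        have h2 := Finset.card_pos.mpr ⟨s, h1⟩
        omega
      | succ N ih =>
        intro c hcard hxin s hs
        by_cases hone : ∀ j, c j ≠ 0 → j = s
        · have hxx : (∑ j, c j • v i j) = c s • v i s := by
            rw [Finset.sum_eq_single s]
            · intro j _ hj
              rcases eq_or_ne (c j) 0 with h | h
              · rw [h, zero_smul]
              · exact absurd (hone j h) hj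
            · intro h; exact absurd (Finset.mem_univ s) h
          rw [hxx] at hxin
          have h3 := Submodule.smul_mem U (c s)⁻¹ hxin
          rwa [smul_smul, inv_mul_cancel₀ hs, one_smul] at h3
        · push_neg at hone
          obtain ⟨j0, hj0, hj0s⟩ := hone
          set c' : Fin t → F := fun j => c j * (ζ ^ k ^ (j : ℕ) - ζ ^ k ^ (j0 : ℕ)) with hc'
          have hsum : (∑ j, c' j • v i j) =
              A (∑ j, c j • v i j) - ζ ^ k ^ (j0 : ℕ) • (∑ j, c j • v i j) := by
            rw [map_sum, Finset.smul_sum, ← Finset.sum_sub_distrib]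
            refine Finset.sum_congr rfl fun j _ => ?_
            rw [map_smul, c5]
            show (c j * (ζ ^ k ^ (j : ℕ) - ζ ^ k ^ (j0 : ℕ))) • v i j =
              c j • ζ ^ k ^ (j : ℕ) • v i j - ζ ^ k ^ (j0 : ℕ) • c j • v i j
            rw [smul_smul, smul_smul, ← sub_smul]
            congr 1
            ring
          have hin' : (∑ j, c' j • v i j) ∈ U := by
            rw [hsum]
            exact Submodule.sub_mem U (hUA _ hxin) (Submodule.smul_mem U _ hxin)
          have hcard' : (Finset.filter (fun j => c' j ≠ 0) Finset.univ).card ≤ N := by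
            have hsub : Finset.filter (fun j => c' j ≠ 0) Finset.univ ⊆
                (Finset.filter (fun j => c j ≠ 0) Finset.univ).erase j0 := by
              intro j hj
              rw [Finset.mem_filter] at hj
              rw [Finset.mem_erase, Finset.mem_filter]
              have h1 : c j ≠ 0 := by
                intro h
                apply hj.2
                rw [hc']
                show c j * _ = 0
                rw [h, zero_mul]
              refine ⟨?_, Finset.mem_univ j, h1⟩
              intro hj0e
              apply hj.2
              rw [hc']
              show c j * (ζ ^ k ^ (j : ℕ) - ζ ^ k ^ (j0 : ℕ)) = 0
              rw [hj0e, sub_self, mul_zero]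
            have h2 := Finset.card_le_card hsub
            have h3 : j0 ∈ Finset.filter (fun j => c j ≠ 0) Finset.univ :=
              Finset.mem_filter.mpr ⟨Finset.mem_univ _, hj0⟩
            have h4 := Finset.card_erase_of_mem h3
            omega
          have hcs' : c' s ≠ 0 := by
            rw [hc']
            show c s * (ζ ^ k ^ (s : ℕ) - ζ ^ k ^ (j0 : ℕ)) ≠ 0
            apply mul_ne_zero hs
            rw [sub_ne_zero]
            intro h
            exact hj0s (hdist s j0 h).symm
          exact ih c' hcard' hin' s hcs'
    have hvs : v i s ∈ U := by
      refine claim (Finset.filter (fun j => c j ≠ 0) Finset.univ).card c le_rfl ?_ s hcs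
      rw [hc]; exact hxU
    have hstep : ∀ j : Fin t, v i j ∈ U →
        ∀ d : ℕ, v i ⟨((j : ℕ) + d) % t, Nat.mod_lt _ ht0⟩ ∈ U := by
      intro j hj d
      induction d with
      | zero =>
        have he : (⟨((j : ℕ) + 0) % t, Nat.mod_lt _ ht0⟩ : Fin t) = j := by
          apply Fin.ext
          show ((j : ℕ) + 0) % t = (j : ℕ)
          rw [Nat.add_zero]
          exact Nat.mod_eq_of_lt j.isLt
        rw [he]; exact hj
      | succ d ihd =>
        set w : Fin t := ⟨((j : ℕ) + d) % t, Nat.mod_lt _ ht0⟩ with hwdef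
        have hBw := hUB _ ihd
        have hsucc : ((j : ℕ) + (d + 1)) % t = (((j : ℕ) + d) % t + 1) % t := by
          have h1 : (j : ℕ) + (d + 1) = ((j : ℕ) + d) + 1 := by omega
          rw [h1, Nat.add_mod ((j : ℕ) + d) 1 t]
          by_cases ht1 : t = 1
          · simp [ht1]
          · rw [Nat.mod_eq_of_lt (show 1 < t by omega)]
        by_cases hcase : ((j : ℕ) + d) % t + 1 < t
        · have hwv : ((w : ℕ)) + 1 < t := hcase
          rw [c6 i w hwv] at hBw
          have he : (⟨((j : ℕ) + (d + 1)) % t, Nat.mod_lt _ ht0⟩ : Fin t) =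
              ⟨(w : ℕ) + 1, hwv⟩ := by
            apply Fin.ext
            show ((j : ℕ) + (d + 1)) % t = ((j : ℕ) + d) % t + 1
            rw [hsucc]
            exact Nat.mod_eq_of_lt hcase
          rw [he]; exact hBw
        · have hwt : ((j : ℕ) + d) % t = t - 1 := by
            have h2 := Nat.mod_lt ((j : ℕ) + d) ht0
            omega
          have hw' : w = ⟨t - 1, Nat.sub_lt (Nat.pos_of_ne_zero (NeZero.ne t)) one_pos⟩ :=
            Fin.ext hwt
          rw [hw', c7 i] at hBw
          have h0 : v i ⟨0, Nat.pos_of_ne_zero (NeZero.ne t)⟩ ∈ U := by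
            have h3 := Submodule.smul_mem U (η ^ (i : ℕ)) hBw
            rwa [smul_smul, mul_inv_cancel₀ (pow_ne_zero _ hη0), one_smul] at h3
          have he : (⟨((j : ℕ) + (d + 1)) % t, Nat.mod_lt _ ht0⟩ : Fin t) =
              ⟨0, Nat.pos_of_ne_zero (NeZero.ne t)⟩ := by
            apply Fin.ext
            show ((j : ℕ) + (d + 1)) % t = 0
            rw [hsucc, hwt]
            by_cases ht1 : t = 1
            · simp [ht1]
            · rw [show t - 1 + 1 = t by omega, Nat.mod_self]
          rw [he]; exact h0
    have hall : ∀ j' : Fin t, v i j' ∈ U := by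
      intro j'
      have h1 := hstep s hvs ((t - (s : ℕ)) + (j' : ℕ))
      have he : (⟨((s : ℕ) + ((t - (s : ℕ)) + (j' : ℕ))) % t, Nat.mod_lt _ ht0⟩ : Fin t)
          = j' := by
        apply Fin.ext
        show ((s : ℕ) + ((t - (s : ℕ)) + (j' : ℕ))) % t = (j' : ℕ)
        have h2 : (s : ℕ) + ((t - (s : ℕ)) + (j' : ℕ)) = (j' : ℕ) + t := by
          have := s.isLt
          omega
        rw [h2, Nat.add_mod_right, Nat.mod_eq_of_lt j'.isLt]
      rw [he] at h1
      exact h1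
    apply le_antisymm hUW
    conv_lhs => rw [hW]
    rw [Submodule.span_le]
    rintro _ ⟨j', rfl⟩
    exact hall j'
  have hgen : ∀ (i' : Fin r) (s : Fin t) (d : ℕ), (s : ℕ) + d ≤ t →
      (B ^ d) (v i' s) = if h : (s : ℕ) + d < t then v i' ⟨(s : ℕ) + d, h⟩
        else (η ^ ((i' : ℕ)))⁻¹ • v i' ⟨0, Nat.pos_of_ne_zero (NeZero.ne t)⟩ := by
    intro i' s d
    induction d with
    | zero =>
      intro _
      rw [pow_zero, Module.End.one_apply,
        dif_pos (by have := s.isLt; omega : (s : ℕ) + 0 < t)]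
      exact congrArg (v i') (Fin.ext (by show (s : ℕ) = (s : ℕ) + 0; omega))
    | succ d ihd =>
      intro hd
      have hd' : (s : ℕ) + d ≤ t := by omega
      have hlt2 : (s : ℕ) + d < t := by omega
      rw [pow_succ', Module.End.mul_apply, ihd hd', dif_pos hlt2]
      by_cases hcase : (s : ℕ) + (d + 1) < t
      · rw [dif_pos hcase]
        have hj' : ((⟨(s : ℕ) + d, hlt2⟩ : Fin t) : ℕ) + 1 < t := hcase
        rw [c6 i' _ hj']
        exact congrArg (v i') (Fin.ext (by show (s : ℕ) + d + 1 = (s : ℕ) + (d + 1); omega))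
      · rw [dif_neg hcase]
        have hmk : (⟨(s : ℕ) + d, hlt2⟩ : Fin t) =
            ⟨t - 1, Nat.sub_lt (Nat.pos_of_ne_zero (NeZero.ne t)) one_pos⟩ :=
          Fin.ext (by show (s : ℕ) + d = t - 1; omega)
        rw [hmk, c7 i']
  have hBt : ∀ (i' : Fin r) (y : Fin n → F), y ∈ W i' →
      (B ^ t) y = (η ^ ((i' : ℕ)))⁻¹ • y := by
    intro i' y hy
    have hgen2 : ∀ s : Fin t, (B ^ t) (v i' s) = (η ^ ((i' : ℕ)))⁻¹ • v i' s := by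
      intro s
      have h1 : t = (s : ℕ) + (t - (s : ℕ)) := by
        have := s.isLt; omega
      have hpow : B ^ t = B ^ ((s : ℕ)) * B ^ (t - (s : ℕ)) := by
        conv_lhs => rw [h1]
        rw [pow_add]
      rw [hpow, Module.End.mul_apply, hgen i' s (t - (s : ℕ)) (by omega),
        dif_neg (by have := s.isLt; omega), map_smul]
      have h0t : ((⟨0, Nat.pos_of_ne_zero (NeZero.ne t)⟩ : Fin t) : ℕ) + (s : ℕ) ≤ t := by
        show 0 + (s : ℕ) ≤ t
        have := s.isLt; omega
      rw [hgen i' ⟨0, Nat.pos_of_ne_zero (NeZero.ne t)⟩ (s : ℕ) h0t,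
        dif_pos (show ((⟨0, Nat.pos_of_ne_zero (NeZero.ne t)⟩ : Fin t) : ℕ) + (s : ℕ) < t from
          by show 0 + (s : ℕ) < t; have := s.isLt; omega)]
      congr 1
      exact congrArg (v i') (Fin.ext (by show 0 + (s : ℕ) = (s : ℕ); omega))
    have hker : W i' ≤ LinearMap.ker ((B ^ t) - (η ^ ((i' : ℕ)))⁻¹ •
        (LinearMap.id : (Fin n → F) →ₗ[F] (Fin n → F))) := by
      conv_lhs => rw [hW]
      rw [Submodule.span_le]
      rintro _ ⟨s, rfl⟩
      simp only [SetLike.mem_coe, LinearMap.mem_ker, LinearMap.sub_apply,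
        LinearMap.smul_apply, LinearMap.id_apply]
      rw [hgen2 s, sub_self]
    have h2 := hker hy
    rw [LinearMap.mem_ker, LinearMap.sub_apply, LinearMap.smul_apply, LinearMap.id_apply,
      sub_eq_zero] at h2
    exact h2
  have c9 : ∀ i j, i ≠ j → ¬ ∃ f : (Fin n → F) →ₗ[F] (Fin n → F),
      Submodule.map f (W i) = W j ∧ (∀ x ∈ W i, f x = 0 → x = 0) ∧
      (∀ x ∈ W i, f (A x) = A (f x) ∧ f (B x) = B (f x)) := by
    intro i j hij
    rintro ⟨f, hmap, hinj, hcomm⟩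
    set x : Fin n → F := v i ⟨0, Nat.pos_of_ne_zero (NeZero.ne t)⟩ with hxdef
    have hxW : x ∈ W i := by
      rw [hW]; exact Submodule.subset_span ⟨_, rfl⟩
    have hfxW : f x ∈ W j := by
      rw [← hmap]; exact Submodule.mem_map_of_mem hxW
    have hiter : ∀ d : ℕ, (B ^ d) x ∈ W i ∧ f ((B ^ d) x) = (B ^ d) (f x) := by
      intro d
      induction d with
      | zero =>
        constructor
        · rw [pow_zero, Module.End.one_apply]; exact hxW
        · rw [pow_zero, Module.End.one_apply, Module.End.one_apply]
      | succ d ihd =>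
        obtain ⟨h1, h2⟩ := ihd
        constructor
        · rw [pow_succ', Module.End.mul_apply]
          exact (c4 i _ h1).2
        · rw [pow_succ', Module.End.mul_apply, Module.End.mul_apply, (hcomm _ h1).2, h2]
    have h1 : f ((B ^ t) x) = (B ^ t) (f x) := (hiter t).2
    rw [hBt i x hxW, map_smul, hBt j (f x) hfxW] at h1
    have hfx0 : f x ≠ 0 := by
      intro h
      have h2 := hinj x hxW h
      exact (c3 i).ne_zero ⟨0, Nat.pos_of_ne_zero (NeZero.ne t)⟩ h2
    have h3 : ((η ^ ((i : ℕ)))⁻¹ - (η ^ ((j : ℕ)))⁻¹) • f x = 0 := by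
      rw [sub_smul, h1, sub_self]
    have h4 : η ^ ((i : ℕ)) = η ^ ((j : ℕ)) := by
      rcases smul_eq_zero.mp h3 with h | h
      · rw [sub_eq_zero] at h
        exact inv_inj.mp h
      · exact absurd h hfx0
    have h5 : (i : ℕ) = (j : ℕ) :=
      aux_pow_inj η hη.eq_orderOf.symm i.isLt j.isLt h4
    exact hij (Fin.ext h5)
  exact ⟨c1, c2, c3, c4, c5, c6, c7, c8, c9⟩
end

section
/- Let p and s be distinct odd primes, ζ a primitive p-th root of unity in F̄_s, and Q the set of nonzero quadratic residues mod p. Then the Frobenius x ↦ x^s fixes the element Σ_{x∈Q} ζ^x if and only if s ∈ Q, i.e., s is a quadratic residue mod p. -/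
set_option maxHeartbeats 1000000

open Finset

section Aux

variable {p : ℕ} [Fact p.Prime]

lemma unit_isSquare_iff (u : (ZMod p)ˣ) : IsSquare (u : ZMod p) ↔ IsSquare u := by
  constructor
  · rintro ⟨r, hr⟩
    have hr0 : r ≠ 0 := by
      rintro rfl
      exact u.ne_zero (by simpa using hr)
    exact ⟨Units.mk0 r hr0, Units.ext (by simpa using hr)⟩
  · rintro ⟨v, rfl⟩
    exact ⟨v, by simp⟩

lemma nonsquare_mul_nonsquare {a b : (ZMod p)ˣ} (ha : ¬IsSquare a) (hb : ¬IsSquare b) :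
    IsSquare (a * b) := by
  rw [← unit_isSquare_iff]
  rw [← unit_isSquare_iff] at ha hb
  rw [← quadraticChar_one_iff_isSquare (Units.ne_zero (a * b))]
  rw [← quadraticChar_neg_one_iff_not_isSquare] at ha hb
  rw [Units.val_mul, map_mul, ha, hb]
  ring

lemma square_mul_nonsquare {a b : (ZMod p)ˣ} (ha : IsSquare a) (hb : ¬IsSquare b) :
    ¬IsSquare (a * b) := by
  intro h
  apply hb
  have hb' : b = a⁻¹ * (a * b) := by group
  rw [hb']
  exact ha.inv.mul h

end Aux

open Classical in
/-- The Frobenius x ↦ x^s fixes the Gauss sum c = Σ_{x∈Q} ζ^x (Q the nonzero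
quadratic residues mod p) iff s is a quadratic residue mod p. -/
theorem stmt10 (p s : ℕ) [Fact p.Prime] [Fact s.Prime] (hp : Odd p) (hs : Odd s)
    (hps : p ≠ s)
    (ζ : AlgebraicClosure (ZMod s)) (hζ : IsPrimitiveRoot ζ p)
    (c : AlgebraicClosure (ZMod s))
    (hc : c = ∑ x ∈ Finset.univ.filter (fun x : (ZMod p)ˣ => IsSquare x),
      ζ ^ ((x : ZMod p)).val) :
    c ^ s = c ↔ IsSquare ((s : ZMod p)) := by
  classical
  have hpp : p.Prime := Fact.out
  have hsp : s.Prime := Fact.out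
  have hp2 : p ≠ 2 := by rintro rfl; exact (Nat.not_odd_iff_even.mpr even_two) hp
  have hs2 : s ≠ 2 := by rintro rfl; exact (Nat.not_odd_iff_even.mpr even_two) hs
  haveI : NeZero p := ⟨hpp.ne_zero⟩
  haveI : CharP (AlgebraicClosure (ZMod s)) s := inferInstance
  -- the additive character
  set ψ : AddChar (ZMod p) (AlgebraicClosure (ZMod s)) := AddChar.zmodChar p hζ.pow_eq_one with hψdef
  have hψ : ψ.IsPrimitive := AddChar.zmodChar_primitive_of_primitive_root p hζ
  -- the multiplicative character
  set χ : MulChar (ZMod p) (AlgebraicClosure (ZMod s)) :=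
    (quadraticChar (ZMod p)).ringHomComp (Int.castRingHom (AlgebraicClosure (ZMod s))) with hχdef
  have hs0F : (2 : (AlgebraicClosure (ZMod s))) ≠ 0 := by
    intro h
    have h2 := (CharP.cast_eq_zero_iff (AlgebraicClosure (ZMod s)) s 2).mp (by exact_mod_cast h)
    exact hs2 ((Nat.prime_dvd_prime_iff_eq hsp Nat.prime_two).mp h2)
  have hχ1 : χ ≠ 1 := by
    intro h
    obtain ⟨a, ha⟩ := quadraticChar_exists_neg_one (F := ZMod p)
      (by rw [ZMod.ringChar_zmod_n]; exact hp2)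
    have ha0 : a ≠ 0 := by
      intro h0; rw [h0] at ha; simp [quadraticChar_zero] at ha
    have : χ a = 1 := by
      rw [h]; exact MulChar.one_apply (isUnit_iff_ne_zero.mpr ha0)
    rw [hχdef] at this
    simp only [MulChar.ringHomComp_apply, ha] at this
    apply hs0F
    have : (-1 : (AlgebraicClosure (ZMod s))) = 1 := by exact_mod_cast this
    linear_combination -this
  have hχq : χ.IsQuadratic := (quadraticChar_isQuadratic (ZMod p)).comp _
  have hpF : ((Fintype.card (ZMod p) : (AlgebraicClosure (ZMod s)))) ≠ 0 := by
    rw [ZMod.card]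
    intro h
    have := (CharP.cast_eq_zero_iff (AlgebraicClosure (ZMod s)) s p).mp (by exact_mod_cast h)
    exact hps ((Nat.prime_dvd_prime_iff_eq hsp hpp).mp this).symm
  have hg0 : gaussSum χ ψ ≠ 0 := gaussSum_ne_zero_of_nontrivial hpF hχ1 hψ
  -- notation for the two sums
  set Q : Finset (ZMod p)ˣ := Finset.univ.filter (fun x => IsSquare x) with hQ
  set N : Finset (ZMod p)ˣ := Finset.univ.filter (fun x => ¬IsSquare x) with hN
  set c' : (AlgebraicClosure (ZMod s)) := ∑ x ∈ N, ζ ^ ((x : ZMod p)).val with hc'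
  -- rewrite c, c' using ψ
  have hcψ : c = ∑ x ∈ Q, ψ (x : ZMod p) := by
    rw [hc]; exact Finset.sum_congr rfl fun x _ => by rw [AddChar.zmodChar_apply]
  have hc'ψ : c' = ∑ x ∈ N, ψ (x : ZMod p) := by
    rw [hc']; exact Finset.sum_congr rfl fun x _ => by rw [AddChar.zmodChar_apply]
  -- Gauss sum equals c - c'
  have hguniv : gaussSum χ ψ = ∑ x : (ZMod p)ˣ, χ (x : ZMod p) * ψ (x : ZMod p) := by
    rw [gaussSum]
    rw [show (Finset.univ : Finset (ZMod p)) = insert 0 (Finset.univ.erase 0) by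
      rw [Finset.insert_erase (Finset.mem_univ 0)]]
    rw [Finset.sum_insert (Finset.notMem_erase _ _)]
    rw [MulChar.map_zero, zero_mul, zero_add]
    refine (Finset.sum_bij (fun (x : (ZMod p)ˣ) _ => (x : ZMod p)) ?_ ?_ ?_ ?_).symm
    · intro x _; exact Finset.mem_erase.mpr ⟨Units.ne_zero x, Finset.mem_univ _⟩
    · intro a _ b _ h; exact Units.ext h
    · intro b hb
      obtain ⟨hb0, -⟩ := Finset.mem_erase.mp hb
      exact ⟨(isUnit_iff_ne_zero.mpr hb0).unit, Finset.mem_univ _,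
        (isUnit_iff_ne_zero.mpr hb0).unit_spec⟩
    · intro x _; rfl
  have hA : ∀ x ∈ Q, χ (x : ZMod p) * ψ (x : ZMod p) = ψ (x : ZMod p) := by
    intro x hx
    have hx' : IsSquare (x : ZMod p) :=
      (unit_isSquare_iff x).mpr (Finset.mem_filter.mp hx).2
    have h1 : quadraticChar (ZMod p) (x : ZMod p) = 1 :=
      (quadraticChar_one_iff_isSquare (Units.ne_zero x)).mpr hx'
    rw [hχdef, MulChar.ringHomComp_apply, h1]
    simp
  have hB : ∀ x ∈ N, χ (x : ZMod p) * ψ (x : ZMod p) = -ψ (x : ZMod p) := by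
    intro x hx
    have hx' : ¬IsSquare (x : ZMod p) := fun h =>
      (Finset.mem_filter.mp hx).2 ((unit_isSquare_iff x).mp h)
    have h1 : quadraticChar (ZMod p) (x : ZMod p) = -1 :=
      quadraticChar_neg_one_iff_not_isSquare.mpr hx'
    rw [hχdef, MulChar.ringHomComp_apply, h1]
    simp
  have hgcc : gaussSum χ ψ = c - c' := by
    calc gaussSum χ ψ = ∑ x : (ZMod p)ˣ, χ (x : ZMod p) * ψ (x : ZMod p) := hguniv
      _ = (∑ x ∈ Q, χ (x : ZMod p) * ψ (x : ZMod p))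
          + ∑ x ∈ N, χ (x : ZMod p) * ψ (x : ZMod p) := by
          rw [← Finset.sum_filter_add_sum_filter_not Finset.univ
            (fun x : (ZMod p)ˣ => IsSquare x)
            (fun x : (ZMod p)ˣ => χ (x : ZMod p) * ψ (x : ZMod p)), ← hQ, ← hN]
      _ = (∑ x ∈ Q, ψ (x : ZMod p)) + ∑ x ∈ N, -ψ (x : ZMod p) := by
          rw [Finset.sum_congr rfl hA, Finset.sum_congr rfl hB]
      _ = c - c' := by rw [hcψ, hc'ψ, Finset.sum_neg_distrib]; ring
  have hcc' : c ≠ c' := fun h => hg0 (by rw [hgcc, h, sub_self])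
  -- the unit corresponding to s
  have hcop : s.Coprime p := (Nat.coprime_primes hsp hpp).mpr (Ne.symm hps)
  set u : (ZMod p)ˣ := ZMod.unitOfCoprime s hcop with hu
  have huval : (u : ZMod p) = (s : ZMod p) := ZMod.coe_unitOfCoprime s hcop
  -- Frobenius computation
  have hfrob : c ^ s = ∑ x ∈ Q, ψ ((x * u : (ZMod p)ˣ) : ZMod p) := by
    rw [hc, sum_pow_char]
    refine Finset.sum_congr rfl fun x _ => ?_
    rw [← pow_mul, hψdef, ← AddChar.zmodChar_apply' hζ.pow_eq_one]
    congr 1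
    push_cast
    rw [ZMod.natCast_val, ZMod.cast_id, huval]
  by_cases hsq : IsSquare ((s : ZMod p))
  · simp only [hsq, iff_true]
    have husq : IsSquare u := (unit_isSquare_iff u).mp (huval ▸ hsq)
    rw [hfrob, hcψ]
    refine Finset.sum_nbij' (i := fun x => x * u) (j := fun y => y * u⁻¹) ?_ ?_ ?_ ?_ ?_
    · intro x hx
      exact Finset.mem_filter.mpr ⟨Finset.mem_univ _,
        ((Finset.mem_filter.mp hx).2).mul husq⟩
    · intro y hy
      exact Finset.mem_filter.mpr ⟨Finset.mem_univ _,
        ((Finset.mem_filter.mp hy).2).mul husq.inv⟩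
    · intro x _; simp
    · intro y _; simp
    · intro x _; rfl
  · simp only [hsq, iff_false]
    have husq : ¬IsSquare u := fun h => hsq (huval ▸ (unit_isSquare_iff u).mpr h)
    have : c ^ s = c' := by
      rw [hfrob, hc'ψ]
      refine Finset.sum_nbij' (i := fun x => x * u) (j := fun y => y * u⁻¹) ?_ ?_ ?_ ?_ ?_
      · intro x hx
        exact Finset.mem_filter.mpr ⟨Finset.mem_univ _,
          square_mul_nonsquare (Finset.mem_filter.mp hx).2 husq⟩
      · intro y hy
        have : ¬IsSquare u⁻¹ := fun h => husq (by simpa using h.inv)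
        exact Finset.mem_filter.mpr ⟨Finset.mem_univ _,
          nonsquare_mul_nonsquare (Finset.mem_filter.mp hy).2 this⟩
      · intro x _; simp
      · intro y _; simp
      · intro x _; rfl
    rw [this]
    exact fun h => hcc' h.symm
end

section
/- Under the hypotheses of the previous lemma (f monic with distinct roots permuted by x ↦ x^d), if g, h ∈ F[x] satisfy g ≡ h (mod f), then g(x^d) ≡ h(x^d) (mod f). -/
/-- Corollary 4.3: with f monic with distinct roots permuted by x ↦ x^d, if
g ≡ h (mod f) then g(x^d) ≡ h(x^d) (mod f). -/
theorem stmt15 {F K : Type*} [Field F] [Field K] [Algebra F K]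
    (f : Polynomial F) (hf : f.Monic)
    (hsplit : (f.map (algebraMap F K)).Splits) (hsep : f.Separable)
    (d : ℕ) (hd : 0 < d)
    (hroots : (fun x : K => x ^ d) '' {x : K | Polynomial.aeval x f = 0}
      = {x : K | Polynomial.aeval x f = 0})
    (g h : Polynomial F) (hgh : f ∣ g - h) :
    f ∣ g.comp (Polynomial.X ^ d) - h.comp (Polynomial.X ^ d) := by
  classical
  obtain ⟨q, hq⟩ := hgh
  have key : f ∣ f.comp (Polynomial.X ^ d) := by
    set φ := algebraMap F K
    have hφ : Function.Injective φ := (algebraMap F K).injective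
    rw [← Polynomial.map_dvd_map φ hφ hf]
    rw [Polynomial.map_comp, Polynomial.map_pow, Polynomial.map_X]
    have hf0 : f.map φ ≠ 0 := (hf.map φ).ne_zero
    have hsplit' : (f.map φ).Splits := hsplit
    apply hsplit'.dvd_of_roots_le_roots hf0
    · have hnodup : (f.map φ).roots.Nodup :=
        Polynomial.nodup_roots (hsep.map (f := φ))
      rw [Multiset.le_iff_count]
      intro a
      by_cases ha : a ∈ (f.map φ).roots
      · have hcount1 : (f.map φ).roots.count a = 1 :=
          le_antisymm (Multiset.nodup_iff_count_le_one.1 hnodup a) (Multiset.one_le_count_iff_mem.2 ha)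
        rw [hcount1]
        rw [Multiset.one_le_count_iff_mem]
        have haroot : Polynomial.aeval a f = 0 := by
          have := Polynomial.isRoot_of_mem_roots ha
          simpa [Polynomial.IsRoot, Polynomial.eval_map, Polynomial.aeval_def] using this
        have hmem : a ^ d ∈ {x : K | Polynomial.aeval x f = 0} := by
          rw [← hroots]; exact ⟨a, haroot, rfl⟩
        have hcomp0 : ((f.map φ).comp (Polynomial.X ^ d)).eval a = 0 := by
          simp only [Polynomial.eval_comp, Polynomial.eval_pow, Polynomial.eval_X]
          simpa [Polynomial.eval_map, Polynomial.aeval_def] using hmem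
        rw [Polynomial.mem_roots']
        refine ⟨?_, hcomp0⟩
        intro hzero
        rw [Polynomial.comp_eq_zero_iff] at hzero
        rcases hzero with h1 | ⟨_, h2⟩
        · exact hf0 h1
        · have := congrArg Polynomial.natDegree h2
          rw [Polynomial.natDegree_X_pow, Polynomial.natDegree_C] at this
          exact hd.ne' this
      · simp [Multiset.count_eq_zero_of_notMem ha]
  obtain ⟨r, hr⟩ := key
  have : g.comp (Polynomial.X ^ d) - h.comp (Polynomial.X ^ d)
      = (g - h).comp (Polynomial.X ^ d) := by
    simp [Polynomial.sub_comp]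
  rw [this, hq, Polynomial.mul_comp, hr]
  exact ⟨r * q.comp (Polynomial.X ^ d), by ring⟩
end

section
/- Let s be a prime, m coprime to s, q a power of s, k an integer of order t modulo m with q ≡ k^j (mod m) for some j, ζ a primitive m-th root of unity in F̄_s, and f = ∏_{i=0}^{t−1}(x − ζ^{k^i}) ∈ F_q[x]. Then for every η ∈ F_qˣ there exists z(x) ∈ F_q[x] such that z(x)·z(x^k)·z(x^{k²})⋯z(x^{k^{t−1}}) ≡ η (mod f). -/
open Polynomial

private lemma shiftProd {G : Type*} [CommGroup G] (t : ℕ) (v : ℕ → G)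
    (hv : ∀ a, v (a + t) = v a) (c : ℕ) :
    ∏ i ∈ Finset.range t, v (c + i) = ∏ i ∈ Finset.range t, v i := by
  induction c with
  | zero => simp
  | succ c ih =>
    have h1 : (∏ i ∈ Finset.range t, v (c + (i + 1))) * v (c + 0) =
        (∏ i ∈ Finset.range t, v (c + i)) * v (c + t) := by
      rw [← Finset.prod_range_succ' (fun i => v (c + i)) t,
        Finset.prod_range_succ (fun i => v (c + i)) t]
    rw [hv c] at h1
    have h2 : ∏ i ∈ Finset.range t, v (c + 1 + i) = ∏ i ∈ Finset.range t, v (c + i) := by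
      have := mul_right_cancel h1
      simpa [Nat.add_comm, Nat.add_assoc, Nat.add_left_comm] using this
    rw [h2, ih]

private lemma geomAux (q : ℕ) (hq : 1 ≤ q) : ∀ d : ℕ,
    (∑ c ∈ Finset.range d, q ^ c) * (q - 1) = q ^ d - 1 := by
  intro d
  induction d with
  | zero => simp
  | succ d ih =>
    have h1 : 1 ≤ q ^ d := Nat.one_le_pow _ _ hq
    have h2 : q ^ d ≤ q ^ (d+1) := Nat.pow_le_pow_right hq (by omega)
    rw [Finset.sum_range_succ, Nat.add_mul, ih, pow_succ]
    have h3 : q ^ d * (q - 1) = q ^ d * q - q ^ d := by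
      rw [Nat.mul_sub]; omega
    have h4 : q ^ d ≤ q ^ d * q := Nat.le_mul_of_pos_right _ (by omega)
    omega

open Polynomial in
/-- Lemma 4.4: let K be a finite field of characteristic s with q = |K| elements,
gcd(s,m)=1, k of order t mod m with q ≡ k^j (mod m) for some j, ζ a primitive m-th
root of unity in an extension L of K, and f ∈ K[x] the polynomial whose roots are
ζ, ζ^k, …, ζ^{k^{t-1}}. Then for every nonzero η ∈ K there exists z(x) ∈ K[x] with
z(x)·z(x^k)⋯z(x^{k^{t−1}}) ≡ η (mod f). -/
theorem stmt16 {K L : Type*} [Field K] [Fintype K] [Field L] [Algebra K L]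
    (s m k t q j : ℕ) (hs : s.Prime) (hchar : ringChar K = s)
    (hq : q = Fintype.card K) (hsm : s.Coprime m) (hm : 0 < m)
    (hkt : orderOf ((k : ZMod m)) = t) (hqk : ((q : ZMod m)) = ((k : ZMod m)) ^ j)
    (ζ : L) (hζ : IsPrimitiveRoot ζ m)
    (f : Polynomial K)
    (hf : f.map (algebraMap K L) = ∏ i ∈ Finset.range t, (X - C (ζ ^ k ^ i)))
    (η : K) (hη : η ≠ 0) :
    ∃ z : Polynomial K,
      f ∣ (∏ i ∈ Finset.range t, z.comp (X ^ k ^ i)) - C η := by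
  classical
  set φ : K →+* L := algebraMap K L with hφ
  have hφinj : Function.Injective φ := φ.injective
  rcases Nat.eq_zero_or_pos t with ht0 | ht
  · subst ht0
    have h1 : f.map φ = (1 : K[X]).map φ := by simpa using hf
    have : f = 1 := Polynomial.map_injective φ hφinj h1
    refine ⟨1, ?_⟩
    rw [this]
    exact one_dvd _
  -- basic setup
  haveI : Fact s.Prime := ⟨hs⟩
  haveI hKchar : CharP K s := hchar ▸ ringChar.charP K
  haveI hLchar : CharP L s := charP_of_injective_algebraMap hφinj s
  obtain ⟨npow, -, hqs⟩ := FiniteField.card K s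
  rw [← hq] at hqs
  have hq2 : 2 ≤ q := hq ▸ Fintype.one_lt_card
  haveI : NeZero m := ⟨hm.ne'⟩
  -- ζ as a unit and exponent arithmetic
  have hζu : IsUnit ζ := hζ.isUnit hm.ne'
  have hζord : orderOf ζ = m := (hζ.eq_orderOf).symm
  have hzz : ∀ a b : ℕ, ((a : ZMod m) = (b : ZMod m)) → ζ ^ a = ζ ^ b := by
    intro a b hab
    have h1 : a ≡ b [MOD m] := (ZMod.natCast_eq_natCast_iff a b m).mp hab
    have h2 : (hζu.unit : Lˣ) ^ a = hζu.unit ^ b := by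
      rw [pow_eq_pow_iff_modEq]
      rwa [← orderOf_units, hζu.unit_spec, hζord]
    calc ζ ^ a = ((hζu.unit ^ a : Lˣ) : L) := by rw [Units.val_pow_eq_pow_val, hζu.unit_spec]
    _ = ((hζu.unit ^ b : Lˣ) : L) := by rw [h2]
    _ = ζ ^ b := by rw [Units.val_pow_eq_pow_val, hζu.unit_spec]
  have hzz' : ∀ a b : ℕ, ζ ^ a = ζ ^ b → ((a : ZMod m) = (b : ZMod m)) := by
    intro a b hab
    rw [ZMod.natCast_eq_natCast_iff]
    have h2 : (hζu.unit : Lˣ) ^ a = hζu.unit ^ b := by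
      apply Units.ext
      rw [Units.val_pow_eq_pow_val, Units.val_pow_eq_pow_val, hζu.unit_spec]
      exact hab
    rw [pow_eq_pow_iff_modEq, ← orderOf_units, hζu.unit_spec, hζord] at h2
    exact h2
  -- k as a unit mod m
  have hk1 : (k : ZMod m) ^ t = 1 := hkt ▸ pow_orderOf_eq_one (k : ZMod m)
  have hku : IsUnit (k : ZMod m) := IsUnit.of_pow_eq_one hk1 ht.ne'
  have hkuord : orderOf hku.unit = t := by rw [← orderOf_units, hku.unit_spec, hkt]
  have hkmod : ∀ a b : ℕ, a ≡ b [MOD t] → (k : ZMod m) ^ a = (k : ZMod m) ^ b := by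
    intro a b hab
    have : hku.unit ^ a = hku.unit ^ b := by rw [pow_eq_pow_iff_modEq, hkuord]; exact hab
    calc (k : ZMod m) ^ a = ((hku.unit ^ a : (ZMod m)ˣ) : ZMod m) := by
          rw [Units.val_pow_eq_pow_val, hku.unit_spec]
    _ = ((hku.unit ^ b : (ZMod m)ˣ) : ZMod m) := by rw [this]
    _ = (k : ZMod m) ^ b := by rw [Units.val_pow_eq_pow_val, hku.unit_spec]
  have hkmod' : ∀ a b : ℕ, (k : ZMod m) ^ a = (k : ZMod m) ^ b → a ≡ b [MOD t] := by
    intro a b hab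
    have : hku.unit ^ a = hku.unit ^ b := by
      apply Units.ext
      rw [Units.val_pow_eq_pow_val, Units.val_pow_eq_pow_val, hku.unit_spec]
      exact hab
    rwa [pow_eq_pow_iff_modEq, hkuord] at this
  -- α i = ζ ^ k ^ i ; injectivity below t
  set α : ℕ → L := fun i => ζ ^ k ^ i with hα
  have hαcast : ∀ a b : ℕ, (k : ZMod m) ^ a = (k : ZMod m) ^ b → α a = α b := by
    intro a b hab
    apply hzz
    push_cast
    exact hab
  have hαinj : ∀ a ∈ Finset.range t, ∀ b ∈ Finset.range t, α a = α b → a = b := by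
    intro a ha b hb hab
    simp only [Finset.mem_range] at ha hb
    have h1 : ((k ^ a : ℕ) : ZMod m) = ((k ^ b : ℕ) : ZMod m) := hzz' _ _ hab
    push_cast at h1
    have h2 := hkmod' a b h1
    have h3 : a % t = b % t := h2
    rwa [Nat.mod_eq_of_lt ha, Nat.mod_eq_of_lt hb] at h3
  -- Frobenius
  haveI : ExpChar L s := ExpChar.prime hs
  have hfrob : ∀ (p : K[X]) (γ : L), ((p.map φ).eval γ) ^ q = (p.map φ).eval (γ ^ q) := by
    intro p γ
    set ψ : L →+* L := iterateFrobenius L s npow with hψdef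
    have hψ : ∀ x : L, ψ x = x ^ q := by
      intro x; rw [hψdef, iterateFrobenius_def, ← hqs]
    have hcomp : ψ.comp φ = φ := by
      ext c
      rw [RingHom.comp_apply, hψ, ← map_pow, hq, FiniteField.pow_card]
    calc ((p.map φ).eval γ) ^ q = ψ ((p.map φ).eval γ) := (hψ _).symm
    _ = ((p.map φ).map ψ).eval (ψ γ) := by
        show ψ (Polynomial.eval₂ (RingHom.id L) γ (p.map φ)) = _
        rw [Polynomial.hom_eval₂, RingHom.comp_id, ← Polynomial.eval_map]
    _ = (p.map φ).eval (γ ^ q) := by rw [Polynomial.map_map, hcomp, hψ]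
  have hfrobIter : ∀ (p : K[X]) (γ : L) (c : ℕ),
      ((p.map φ).eval γ) ^ q ^ c = (p.map φ).eval (γ ^ q ^ c) := by
    intro p γ c
    induction c generalizing γ with
    | zero => simp
    | succ c ih =>
      rw [pow_succ, pow_mul, ih, hfrob, ← pow_mul, ← pow_succ]
  -- minimal polynomial of ζ
  have hζint : IsIntegral K ζ := by
    refine ⟨X ^ m - 1, ?_, ?_⟩
    · simpa using monic_X_pow_sub_C (1 : K) hm.ne'
    · simp only [eval₂_sub, eval₂_X_pow, eval₂_one]
      rw [hζ.pow_eq_one]; ring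
  set p₀ : K[X] := minpoly K ζ with hp₀def
  have hp₀irr : Irreducible p₀ := minpoly.irreducible hζint
  have hp₀monic : p₀.Monic := minpoly.monic hζint
  have hp₀root : (p₀.map φ).eval ζ = 0 := by
    have := minpoly.aeval K ζ
    rwa [Polynomial.aeval_def, ← Polynomial.eval_map] at this
  -- f is monic, p₀ ∣ f
  have hfmapmonic : (f.map φ).Monic := by
    rw [hf]; exact monic_prod_of_monic _ _ fun i _ => monic_X_sub_C _
  have hfmonic : f.Monic := Polynomial.monic_of_injective hφinj hfmapmonic
  have hfζ : (f.map φ).eval ζ = 0 := by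
    rw [hf, Polynomial.eval_prod]
    apply Finset.prod_eq_zero (Finset.mem_range.mpr ht)
    simp
  have hp₀f : p₀ ∣ f := by
    apply minpoly.dvd K ζ
    rwa [Polynomial.aeval_def, ← Polynomial.eval_map]
  obtain ⟨h, hfh⟩ := hp₀f
  -- roots of f.map are the α i, with no duplicates
  have hroots : (f.map φ).roots = (Finset.range t).val.map α := by
    rw [hf, ← Polynomial.roots_multiset_prod_X_sub_C ((Finset.range t).val.map α)]
    congr 1
    rw [Finset.prod_eq_multiset_prod, Multiset.map_map]
    rfl
  have hrnodup : ((Finset.range t).val.map α).Nodup :=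
    Multiset.Nodup.map_on (fun a ha b hb => hαinj a ha b hb) (Finset.range t).nodup
  -- p₀ and h are coprime
  have hXζ : (X - C ζ) ∣ p₀.map φ := Polynomial.dvd_iff_isRoot.mpr hp₀root
  have hfmapne : f.map φ ≠ 0 := hfmapmonic.ne_zero
  have hp₀h : ¬ p₀ ∣ h := by
    intro hdvd
    have h2 : (X - C ζ) ^ 2 ∣ f.map φ := by
      obtain ⟨c, hc⟩ := hdvd
      rw [hfh, hc, Polynomial.map_mul, Polynomial.map_mul]
      obtain ⟨w, hw⟩ := hXζ
      rw [hw]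
      exact ⟨w * (w * Polynomial.map φ c), by ring⟩
    have h3 : 2 ≤ Polynomial.rootMultiplicity ζ (f.map φ) :=
      (Polynomial.le_rootMultiplicity_iff hfmapne).mpr h2
    rw [← Polynomial.count_roots, hroots] at h3
    have h4 : ((Finset.range t).val.map α).count ζ ≤ 1 :=
      Multiset.nodup_iff_count_le_one.mp hrnodup ζ
    omega
  have hcop : IsCoprime p₀ h := (hp₀irr.coprime_iff_not_dvd).mpr hp₀h
  -- the order d of q mod m
  set d : ℕ := orderOf ((q : ZMod m)) with hddef
  have hqu : IsUnit (q : ZMod m) := by rw [hqk]; exact hku.pow j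
  have hquord : orderOf hqu.unit = d := by rw [← orderOf_units, hqu.unit_spec]
  have hd : 0 < d := by
    rw [← hquord]
    exact orderOf_pos hqu.unit
  have hqd1 : (q : ZMod m) ^ d = 1 := pow_orderOf_eq_one _
  have hqmod' : ∀ a b : ℕ, (q : ZMod m) ^ a = (q : ZMod m) ^ b → a ≡ b [MOD d] := by
    intro a b hab
    have : hqu.unit ^ a = hqu.unit ^ b := by
      apply Units.ext
      rw [Units.val_pow_eq_pow_val, Units.val_pow_eq_pow_val, hqu.unit_spec]
      exact hab
    rwa [pow_eq_pow_iff_modEq, hquord] at this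
  -- ζ ^ (q ^ d) = ζ
  have hζqd : ζ ^ q ^ d = ζ := by
    have h1 : ((q ^ d : ℕ) : ZMod m) = ((1 : ℕ) : ZMod m) := by push_cast; rw [hqd1]
    have := hzz _ _ h1
    simpa using this
  -- the conjugates ζ ^ q ^ c are distinct roots of p₀.map φ
  have hconjroot : ∀ c : ℕ, (p₀.map φ).eval (ζ ^ q ^ c) = 0 := by
    intro c
    rw [← hfrobIter p₀ ζ c, hp₀root]
    exact zero_pow (pow_ne_zero c (by omega))
  have hconjinj : ∀ a ∈ Finset.range d, ∀ b ∈ Finset.range d, ζ ^ q ^ a = ζ ^ q ^ b → a = b := by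
    intro a ha b hb hab
    simp only [Finset.mem_range] at ha hb
    have h1 : ((q ^ a : ℕ) : ZMod m) = ((q ^ b : ℕ) : ZMod m) := hzz' _ _ hab
    push_cast at h1
    have h2 : a % d = b % d := hqmod' a b h1
    rwa [Nat.mod_eq_of_lt ha, Nat.mod_eq_of_lt hb] at h2
  have hp₀mapne : p₀.map φ ≠ 0 := (hp₀monic.map φ).ne_zero
  -- d ≤ natDegree p₀
  have hdle : d ≤ p₀.natDegree := by
    have hsub : (Finset.range d).image (fun c => ζ ^ q ^ c) ⊆ (p₀.map φ).roots.toFinset := by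
      intro x hx
      simp only [Finset.mem_image] at hx
      obtain ⟨c, hc, rfl⟩ := hx
      rw [Multiset.mem_toFinset, Polynomial.mem_roots hp₀mapne]
      exact hconjroot c
    have hcard : ((Finset.range d).image (fun c => ζ ^ q ^ c)).card = d := by
      rw [Finset.card_image_of_injOn, Finset.card_range]
      intro a ha b hb
      exact hconjinj a ha b hb
    calc d = ((Finset.range d).image (fun c => ζ ^ q ^ c)).card := hcard.symm
    _ ≤ (p₀.map φ).roots.toFinset.card := Finset.card_le_card hsub
    _ ≤ Multiset.card (p₀.map φ).roots := (p₀.map φ).roots.toFinset_card_le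
    _ ≤ (p₀.map φ).natDegree := (p₀.map φ).card_roots'
    _ = p₀.natDegree := Polynomial.natDegree_map_eq_of_injective hφinj p₀
  -- the field F = K(ζ)
  set F : IntermediateField K L := IntermediateField.adjoin K {ζ} with hFdef
  haveI : FiniteDimensional K F := IntermediateField.adjoin.finiteDimensional hζint
  haveI : Finite F := Module.finite_of_finite K
  haveI : Fintype F := Fintype.ofFinite F
  have hcardF : Fintype.card F = q ^ Module.finrank K F := by
    rw [hq]; exact Module.card_eq_pow_finrank
  have hfinrank : Module.finrank K F = p₀.natDegree := IntermediateField.adjoin.finrank hζint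
  -- every element of F is a polynomial in ζ
  have hFaeval : ∀ x : F, ∃ g : K[X], (g.map φ).eval ζ = (x : L) := by
    intro x
    have hx : (x : L) ∈ (IntermediateField.adjoin K {ζ}).toSubalgebra := x.2
    rw [IntermediateField.adjoin_simple_toSubalgebra_of_isAlgebraic hζint.isAlgebraic,
      Algebra.adjoin_singleton_eq_range_aeval] at hx
    obtain ⟨g, hg⟩ := hx
    exact ⟨g, by rw [Polynomial.eval_map]; exact hg⟩
  -- every element of F is fixed by x ↦ x ^ q ^ d
  have hFfix : ∀ x : F, x ^ q ^ d = x := by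
    intro x
    have h1 : (x : L) ^ q ^ d = (x : L) := by
      obtain ⟨g, hg⟩ := hFaeval x
      rw [← hg, hfrobIter g ζ d, hζqd]
    exact_mod_cast Subtype.ext (by push_cast [h1]; rfl)
  -- card F ≤ q ^ d
  have hcardle : Fintype.card F ≤ q ^ d := by
    set P : Polynomial F := X ^ q ^ d - X with hPdef
    have hqd2 : 2 ≤ q ^ d := by
      calc 2 ≤ q := hq2
      _ = q ^ 1 := (pow_one q).symm
      _ ≤ q ^ d := Nat.pow_le_pow_right (by omega) hd
    have hPne : P ≠ 0 := by
      intro h0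
      have h1 : (X : Polynomial F) ^ q ^ d = X := by rwa [hPdef, sub_eq_zero] at h0
      have h2 := congrArg Polynomial.natDegree h1
      rw [Polynomial.natDegree_X_pow, Polynomial.natDegree_X] at h2
      omega
    have huniv : (Finset.univ : Finset F) ⊆ P.roots.toFinset := by
      intro x _
      rw [Multiset.mem_toFinset, Polynomial.mem_roots hPne]
      simp only [hPdef, Polynomial.IsRoot.def, Polynomial.eval_sub, Polynomial.eval_pow,
        Polynomial.eval_X]
      rw [hFfix x]; ring
    calc Fintype.card F = (Finset.univ : Finset F).card := rfl
    _ ≤ P.roots.toFinset.card := Finset.card_le_card huniv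
    _ ≤ Multiset.card P.roots := P.roots.toFinset_card_le
    _ ≤ P.natDegree := P.card_roots'
    _ ≤ q ^ d := by
        refine le_trans (Polynomial.natDegree_sub_le _ _) ?_
        rw [Polynomial.natDegree_X_pow, Polynomial.natDegree_X]
        exact max_le le_rfl (by omega)
  have hdeg : p₀.natDegree = d := by
    have h1 : q ^ p₀.natDegree ≤ q ^ d := by
      rw [← hfinrank, ← hcardF]; exact hcardle
    have h2 : p₀.natDegree ≤ d := (Nat.pow_le_pow_iff_right (by omega)).mp h1
    omega
  have hcardF' : Fintype.card F = q ^ d := by rw [hcardF, hfinrank, hdeg]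
  -- norm surjectivity: find β with β ^ e = η in F
  set e : ℕ := ∑ c ∈ Finset.range d, q ^ c with hedef
  have he : e * (q - 1) = q ^ d - 1 := geomAux q (by omega) d
  have hηF : (algebraMap K F) η ≠ 0 :=
    fun h0 => hη ((algebraMap K F).injective (by rw [h0, map_zero]))
  have hβ : ∃ β : F, β ≠ 0 ∧ β ^ e = algebraMap K F η := by
    haveI : IsCyclic Fˣ := inferInstance
    obtain ⟨c, hc⟩ := IsCyclic.exists_generator (α := Fˣ)
    have hcord : orderOf c = q ^ d - 1 := by
      rw [orderOf_eq_card_of_forall_mem_zpowers hc, Nat.card_eq_fintype_card,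
        Fintype.card_units, hcardF']
    set ηU : Fˣ := Units.mk0 (algebraMap K F η) hηF with hηUdef
    obtain ⟨a, ha0⟩ := mem_powers_iff_mem_zpowers.mpr (hc ηU)
    have ha : c ^ a = ηU := ha0
    have hηq1 : ηU ^ (q - 1) = 1 := by
      apply Units.ext
      rw [Units.val_pow_eq_pow_val, Units.val_one]
      show ((algebraMap K F) η) ^ (q - 1) = 1
      have : η ^ (q - 1) = 1 := by
        rw [hq]; exact FiniteField.pow_card_sub_one_eq_one η hη
      rw [← map_pow, this, map_one]
    have hdvd : (q ^ d - 1) ∣ a * (q - 1) := by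
      rw [← hcord]
      apply orderOf_dvd_of_pow_eq_one
      rw [pow_mul, ha, hηq1]
    rw [← he] at hdvd
    have hedvd : e ∣ a := by
      have h1 : e * (q - 1) ∣ a * (q - 1) := hdvd
      have h2 : 0 < q - 1 := by omega
      exact (Nat.mul_dvd_mul_iff_right h2).mp h1
    obtain ⟨b, hb⟩ := hedvd
    refine ⟨((c ^ b : Fˣ) : F), Units.ne_zero _, ?_⟩
    have h3 : (c ^ b) ^ e = ηU := by rw [← pow_mul, ← ha, hb]; ring_nf
    calc ((c ^ b : Fˣ) : F) ^ e = (((c ^ b) ^ e : Fˣ) : F) := by push_cast; ring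
    _ = (ηU : F) := by rw [h3]
    _ = algebraMap K F η := rfl
  obtain ⟨β, hβne, hβe⟩ := hβ
  obtain ⟨g, hg⟩ := hFaeval β
  set βL : L := (β : L) with hβLdef
  have hβLne : βL ≠ 0 := by
    simpa [hβLdef] using fun h => hβne (Subtype.ext (by simpa using h))
  have hβLe : βL ^ e = φ η := by
    have h1 : ((β ^ e : F) : L) = ((algebraMap K F η : F) : L) := by rw [hβe]
    push_cast at h1
    rw [hβLdef]
    rw [h1]
  -- CRT: construct z
  obtain ⟨u, v, huv⟩ := hcop
  set z : K[X] := g * (v * h) + u * p₀ with hzdef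
  have hz₀ : p₀ ∣ z - g := ⟨(1 - g) * u, by rw [hzdef]; linear_combination g * huv⟩
  have hz₁ : h ∣ z - 1 := ⟨v * (g - 1), by rw [hzdef]; linear_combination huv⟩
  have hvalg : ∀ γ : L, (p₀.map φ).eval γ = 0 → (z.map φ).eval γ = (g.map φ).eval γ := by
    intro γ hγ
    obtain ⟨c, hc⟩ := hz₀
    have h1 : z = g + p₀ * c := by linear_combination hc
    rw [h1, Polynomial.map_add, Polynomial.map_mul, Polynomial.eval_add, Polynomial.eval_mul, hγ]
    ring
  have hval1 : ∀ γ : L, (h.map φ).eval γ = 0 → (z.map φ).eval γ = 1 := by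
    intro γ hγ
    obtain ⟨c, hc⟩ := hz₁
    have h1 : z = 1 + h * c := by linear_combination hc
    rw [h1, Polynomial.map_add, Polynomial.map_mul, Polynomial.eval_add, Polynomial.eval_mul, hγ,
      Polynomial.map_one, Polynomial.eval_one]
    ring
  -- values of z at the roots
  set val : ℕ → L := fun a => (z.map φ).eval (ζ ^ k ^ a) with hvaldef
  have hvalperiod : ∀ a : ℕ, val (a + t) = val a := by
    intro a
    have h1 : ζ ^ k ^ (a + t) = ζ ^ k ^ a := by
      apply hzz
      push_cast
      rw [pow_add, hk1, mul_one]
    simp only [hvaldef, h1]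
  -- the conjugate orbit inside range t
  have hkq : ∀ c : ℕ, ζ ^ k ^ (j * c % t) = ζ ^ q ^ c := by
    intro c
    apply hzz
    push_cast
    have h1 : (k : ZMod m) ^ (j * c % t) = (k : ZMod m) ^ (j * c) :=
      hkmod _ _ (Nat.mod_modEq _ t)
    rw [h1, pow_mul, ← hqk]
  set S : Finset ℕ := (Finset.range t).filter (fun i => (p₀.map φ).eval (ζ ^ k ^ i) = 0)
    with hSdef
  set Simg : Finset ℕ := (Finset.range d).image (fun c => j * c % t) with hSimgdef
  have himgsub : Simg ⊆ S := by
    intro x hx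
    simp only [hSimgdef, Finset.mem_image] at hx
    obtain ⟨c, hc, rfl⟩ := hx
    simp only [hSdef, Finset.mem_filter, Finset.mem_range]
    exact ⟨Nat.mod_lt _ ht, by rw [hkq c]; exact hconjroot c⟩
  have himginj : ∀ a ∈ Finset.range d, ∀ b ∈ Finset.range d, j * a % t = j * b % t → a = b := by
    intro a ha b hb hab
    simp only [Finset.mem_range] at ha hb
    have h1 : (k : ZMod m) ^ (j * a) = (k : ZMod m) ^ (j * b) := by
      apply hkmod
      calc j * a ≡ j * a % t [MOD t] := (Nat.mod_modEq _ t).symm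
      _ = j * b % t := hab
      _ ≡ j * b [MOD t] := Nat.mod_modEq _ t
    rw [pow_mul, pow_mul, ← hqk] at h1
    have h2 := hqmod' a b h1
    have h3 : a % d = b % d := h2
    rwa [Nat.mod_eq_of_lt ha, Nat.mod_eq_of_lt hb] at h3
  have hcardSimg : Simg.card = d := by
    rw [hSimgdef, Finset.card_image_of_injOn himginj, Finset.card_range]
  have hcardS : S.card ≤ d := by
    have h1 : S.image α ⊆ (p₀.map φ).roots.toFinset := by
      intro x hx
      simp only [Finset.mem_image] at hx
      obtain ⟨i, hi, rfl⟩ := hx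
      simp only [hSdef, Finset.mem_filter] at hi
      rw [Multiset.mem_toFinset, Polynomial.mem_roots hp₀mapne]
      exact hi.2
    have h2 : (S.image α).card = S.card := by
      rw [Finset.card_image_of_injOn]
      intro a ha b hb
      have ha' : a ∈ Finset.range t := Finset.mem_of_mem_filter a ha
      have hb' : b ∈ Finset.range t := Finset.mem_of_mem_filter b hb
      exact hαinj a ha' b hb'
    calc S.card = (S.image α).card := h2.symm
    _ ≤ (p₀.map φ).roots.toFinset.card := Finset.card_le_card h1
    _ ≤ Multiset.card (p₀.map φ).roots := (p₀.map φ).roots.toFinset_card_le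
    _ ≤ (p₀.map φ).natDegree := (p₀.map φ).card_roots'
    _ = d := by rw [Polynomial.natDegree_map_eq_of_injective hφinj p₀, hdeg]
  have hSeq : Simg = S := Finset.eq_of_subset_of_card_le himgsub (by omega)
  -- value at ζ itself
  have hwζ : (z.map φ).eval ζ = βL := by rw [hvalg ζ hp₀root, hg]
  have hvalconj : ∀ c : ℕ, val (j * c % t) = βL ^ q ^ c := by
    intro c
    simp only [hvaldef]
    rw [hkq c, ← hfrobIter z ζ c, hwζ]
  -- product over range t
  have hprodη : ∏ i ∈ Finset.range t, val i = φ η := by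
    rw [← Finset.prod_filter_mul_prod_filter_not (Finset.range t)
      (fun i => (p₀.map φ).eval (ζ ^ k ^ i) = 0) val]
    have hS1 : ∏ i ∈ S, val i = φ η := by
      rw [← hSeq, hSimgdef, Finset.prod_image himginj]
      calc ∏ c ∈ Finset.range d, val (j * c % t) = ∏ c ∈ Finset.range d, βL ^ q ^ c :=
            Finset.prod_congr rfl fun c _ => hvalconj c
      _ = βL ^ e := Finset.prod_pow_eq_pow_sum (Finset.range d) (fun c => q ^ c) βL
      _ = φ η := hβLe
    have hS2 : ∏ i ∈ (Finset.range t).filter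
        (fun i => ¬ (p₀.map φ).eval (ζ ^ k ^ i) = 0), val i = 1 := by
      apply Finset.prod_eq_one
      intro i hi
      simp only [Finset.mem_filter, Finset.mem_range] at hi
      have hroot : (f.map φ).eval (ζ ^ k ^ i) = 0 := by
        rw [hf, Polynomial.eval_prod]
        apply Finset.prod_eq_zero (Finset.mem_range.mpr hi.1)
        simp
      rw [hfh, Polynomial.map_mul, Polynomial.eval_mul] at hroot
      have hh0 : (h.map φ).eval (ζ ^ k ^ i) = 0 := by
        rcases mul_eq_zero.mp hroot with h0 | h0
        · exact absurd h0 hi.2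
        · exact h0
      exact hval1 _ hh0
    rw [hS1, hS2, mul_one]
  -- all values are nonzero
  have hvalne : ∀ a : ℕ, val a ≠ 0 := by
    have hlt : ∀ i, i < t → val i ≠ 0 := by
      intro i hilt
      by_cases hcase : (p₀.map φ).eval (ζ ^ k ^ i) = 0
      · have hiS : i ∈ S := by
          simp only [hSdef, Finset.mem_filter, Finset.mem_range]
          exact ⟨hilt, hcase⟩
        rw [← hSeq, hSimgdef, Finset.mem_image] at hiS
        obtain ⟨c, hc, rfl⟩ := hiS
        rw [hvalconj c]
        exact pow_ne_zero _ hβLne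
      · have hroot : (f.map φ).eval (ζ ^ k ^ i) = 0 := by
          rw [hf, Polynomial.eval_prod]
          apply Finset.prod_eq_zero (Finset.mem_range.mpr hilt)
          simp
        rw [hfh, Polynomial.map_mul, Polynomial.eval_mul] at hroot
        have hh0 : (h.map φ).eval (ζ ^ k ^ i) = 0 := by
          rcases mul_eq_zero.mp hroot with h0 | h0
          · exact absurd h0 hcase
          · exact h0
        rw [hvaldef]
        simp only []
        rw [hval1 _ hh0]
        exact one_ne_zero
    have hmul : ∀ b a : ℕ, val (a + t * b) = val a := by
      intro b
      induction b with
      | zero => simp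
      | succ b ih =>
        intro a
        have : a + t * (b + 1) = (a + t * b) + t := by ring
        rw [this, hvalperiod, ih]
    intro a
    have h1 : val a = val (a % t) := by
      conv_lhs => rw [← Nat.mod_add_div a t, hmul (a / t) (a % t)]
    rw [h1]
    exact hlt _ (Nat.mod_lt _ ht)
  -- shifted products
  have hshift : ∀ i : ℕ, ∏ i' ∈ Finset.range t, val (i + i') = φ η := by
    intro i
    set vU : ℕ → Lˣ := fun a => Units.mk0 (val a) (hvalne a) with hvUdef
    have hvUper : ∀ a, vU (a + t) = vU a := fun a => Units.ext (hvalperiod a)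
    have h1 := shiftProd t vU hvUper i
    have h2 := congrArg (Units.coeHom L) h1
    rw [map_prod, map_prod] at h2
    simp only [hvUdef, Units.coeHom_apply, Units.val_mk0] at h2
    rw [h2, hprodη]
  -- final assembly
  refine ⟨z, ?_⟩
  rw [← Polynomial.map_dvd_map φ hφinj hfmonic, Polynomial.map_sub, Polynomial.map_prod,
    Polynomial.map_C, hf]
  apply Finset.prod_dvd_of_coprime
  · intro i hi j' hj' hij
    simp only [Finset.coe_range, Set.mem_Iio] at hi hj'
    have hne : ζ ^ k ^ i ≠ ζ ^ k ^ j' := by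
      intro hcon
      exact hij (hαinj i (Finset.mem_range.mpr hi) j' (Finset.mem_range.mpr hj') hcon)
    exact Polynomial.isCoprime_X_sub_C_of_isUnit_sub (sub_ne_zero.mpr hne).isUnit
  · intro i hi
    rw [Polynomial.dvd_iff_isRoot]
    have hmapcomp : ∀ i' : ℕ, (z.comp (X ^ k ^ i' : K[X])).map φ
        = (z.map φ).comp (X ^ k ^ i') := by
      intro i'
      rw [Polynomial.map_comp, Polynomial.map_pow, Polynomial.map_X]
    rw [Polynomial.IsRoot.def, Polynomial.eval_sub, Polynomial.eval_prod, Polynomial.eval_C]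
    have heval : ∀ i' ∈ Finset.range t,
        ((z.comp (X ^ k ^ i' : K[X])).map φ).eval (ζ ^ k ^ i) = val (i + i') := by
      intro i' _
      rw [hmapcomp i', Polynomial.eval_comp, Polynomial.eval_pow, Polynomial.eval_X,
        ← pow_mul, ← pow_add]
    rw [Finset.prod_congr rfl heval, hshift i, sub_self]
end

section
/- Let m be odd, m ≥ 3, and let Q_{4m} = ⟨a,b | a^m = 1, b⁴ = 1, b⁻¹ab = a⁻¹⟩ (with the additional relation making b² central of order 2 realized in the 2-dimensional representations). Let F_q be a finite field of odd characteristic coprime to m and suppose θ = ζ + ζ⁻¹ ∈ F_q, where ζ is a primitive m-th root of unity in F̄_q, and suppose α, β ∈ F_q satisfy α² + β² = θ² − 4 with β ≠ 0. Set à = (θ/2)I + (1/2)[[α, β],[β, −α]] and B = [[0,−1],[1,0]]. Then Ã^m = I, B⁴ = I, B⁻¹ÃB = Ã⁻¹, and the minimal polynomial of à is x² − θx + 1. -/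
open Polynomial in
set_option maxHeartbeats 1000000 in
/-- The explicit 2-dimensional representation of the generalized quaternion group
Q_{4m} (m odd) over F_q: with θ = ζ + ζ⁻¹ ∈ F_q (ζ a primitive m-th root of unity in
an extension, ζ ∉ F_q), α, β ∈ F_q with β ≠ 0 and α² + β² = θ² − 4, set
Ã = (θ/2)I + (1/2)[[α,β],[β,−α]] and B = [[0,−1],[1,0]]. Then Ã^m = I, B⁴ = I,
B⁻¹ÃB = Ã⁻¹, and the minimal polynomial of Ã is x² − θx + 1. -/
theorem stmt18 {K L : Type*} [Field K] [Fintype K] [Field L] [Algebra K L]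
    (m : ℕ) (hm : Odd m) (hm3 : 3 ≤ m)
    (hcard : (Fintype.card K).Coprime (2 * m))
    (ζ : L) (hζ : IsPrimitiveRoot ζ m) (hζK : ζ ∉ Set.range (algebraMap K L))
    (θ : K) (hθ : algebraMap K L θ = ζ + ζ⁻¹)
    (α β : K) (hβ : β ≠ 0) (hαβ : α ^ 2 + β ^ 2 = θ ^ 2 - 4)
    (A Atil B : Matrix (Fin 2) (Fin 2) K)
    (hA : A = !![α, β; β, -α])
    (hAtil : Atil = ((2 : K)⁻¹ * θ) • (1 : Matrix (Fin 2) (Fin 2) K) + (2 : K)⁻¹ • A)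
    (hB : B = !![0, -1; 1, 0]) :
    Atil ^ m = 1 ∧ B ^ 4 = 1 ∧ B⁻¹ * Atil * B = Atil⁻¹ ∧
    minpoly K Atil = X ^ 2 - C θ * X + 1 := by
  -- characteristic is odd
  have h2 : (2:K) ≠ 0 := by
    intro h
    have hd : ringChar K ∣ 2 := ringChar.dvd (by exact_mod_cast h)
    have hch : ringChar K = 2 :=
      ((Nat.dvd_prime Nat.prime_two).mp hd).resolve_left CharP.ringChar_ne_one
    have h2c : Fintype.card K % 2 = 0 := FiniteField.even_card_of_char_two hch
    have hc2 : (Fintype.card K).Coprime 2 := Nat.Coprime.coprime_dvd_right ⟨m, rfl⟩ hcard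
    have : (2:ℕ) ∣ Nat.gcd (Fintype.card K) 2 :=
      Nat.dvd_gcd (Nat.dvd_of_mod_eq_zero h2c) dvd_rfl
    rw [hc2] at this; omega
  -- explicit form of Atil
  have hAtil' : Atil = !![2⁻¹*(θ+α), 2⁻¹*β; 2⁻¹*β, 2⁻¹*(θ-α)] := by
    subst hA hAtil
    ext i j
    fin_cases i <;> fin_cases j <;> simp [Matrix.one_apply] <;> ring
  clear hAtil hA
  -- the quadratic relation
  have hsq : Atil ^ 2 = θ • Atil - 1 := by
    rw [hAtil']
    ext i j
    fin_cases i <;> fin_cases j <;>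
      simp [pow_two, Matrix.mul_apply, Fin.sum_univ_two, Matrix.one_apply]
    all_goals field_simp
    all_goals try ring
    all_goals linear_combination (1:K) * hαβ
  -- algebraMap into matrices
  have halg : ∀ c : K, algebraMap K (Matrix (Fin 2) (Fin 2) K) c = c • 1 := fun c => by
    simp [Algebra.algebraMap_eq_smul_one]
  -- p kills Atil
  have haeval : (aeval Atil) (X ^ 2 - C θ * X + 1 : K[X]) = 0 := by
    simp only [map_add, map_sub, map_mul, map_pow, aeval_X, aeval_C, map_one, halg,
      Matrix.smul_mul, one_mul, hsq]
    abel
  -- p is monic of degree 2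
  have hpm : (X ^ 2 - C θ * X + 1 : K[X]).Monic := by
    have : (X ^ 2 - C θ * X + 1 : K[X]) = X ^ 2 + (C (-θ) * X + C 1) := by
      simp [map_neg]; ring
    rw [this]
    apply Polynomial.monic_X_pow_add
    have h1 : (C (-θ) * X + C 1 : K[X]).degree ≤ 1 := by
      apply le_trans (Polynomial.degree_add_le _ _)
      simp only [max_le_iff]
      exact ⟨Polynomial.degree_C_mul_X_le _,
        le_trans Polynomial.degree_C_le (by norm_num)⟩
    exact lt_of_le_of_lt h1 (by norm_num)
  have hpdeg : (X ^ 2 - C θ * X + 1 : K[X]).natDegree = 2 := by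
    compute_degree!
  have hint : IsIntegral K Atil := ⟨_, hpm, haeval⟩
  have hdvd := minpoly.dvd K Atil haeval
  -- minpoly has degree 2
  have hmin_monic := minpoly.monic hint
  have hndle : (minpoly K Atil).natDegree ≤ 2 := by
    have := Polynomial.natDegree_le_of_dvd hdvd hpm.ne_zero
    omega
  have hndpos : 0 < (minpoly K Atil).natDegree := minpoly.natDegree_pos hint
  have hndne1 : (minpoly K Atil).natDegree ≠ 1 := by
    intro h1
    have heq := hmin_monic.eq_X_add_C h1
    have h0 := minpoly.aeval K Atil
    rw [heq] at h0
    simp only [map_add, aeval_X, aeval_C, halg] at h0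
    have := congrArg (fun M => M 0 1) h0
    simp [hAtil', Matrix.one_apply] at this
    rcases this with h | h
    · exact h2 (by simpa [inv_eq_zero] using h)
    · exact hβ h
  have hnd2 : (minpoly K Atil).natDegree = 2 := by omega
  -- minpoly = p
  have hminp : minpoly K Atil = X ^ 2 - C θ * X + 1 := by
    obtain ⟨q, hq⟩ := hdvd
    have hq0 : q ≠ 0 := by
      intro h; rw [h, mul_zero] at hq; exact hpm.ne_zero hq
    have hqmon : q.Monic := hmin_monic.of_mul_monic_left (hq ▸ hpm)
    have hqd : q.natDegree = 0 := by
      have := Polynomial.natDegree_mul (hmin_monic.ne_zero) hq0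
      rw [← hq, hpdeg, hnd2] at this
      omega
    have : q = 1 := hqmon.natDegree_eq_zero.mp hqd
    rw [hq, this, mul_one]
  -- Atil^m = 1
  have hm0 : m ≠ 0 := by omega
  have hζ0 : ζ ≠ 0 := hζ.ne_zero hm0
  have hζne : ζ ≠ ζ⁻¹ := by
    intro h
    have : ζ ^ 2 = 1 := by
      rw [pow_two]; nth_rewrite 2 [h]; exact mul_inv_cancel₀ hζ0
    have := hζ.dvd_of_pow_eq_one 2 this
    have := Nat.le_of_dvd (by norm_num) this
    omega
  have hmap : (X ^ 2 - C θ * X + 1 : K[X]).map (algebraMap K L)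
      = (X - C ζ) * (X - C ζ⁻¹) := by
    have hmul : ζ * ζ⁻¹ = 1 := mul_inv_cancel₀ hζ0
    simp only [Polynomial.map_add, Polynomial.map_sub, Polynomial.map_mul,
      Polynomial.map_pow, Polynomial.map_X, Polynomial.map_C, Polynomial.map_one, hθ]
    rw [show ((X : L[X]) - C ζ) * (X - C ζ⁻¹)
        = X ^ 2 - C (ζ + ζ⁻¹) * X + C (ζ * ζ⁻¹) by push_cast [map_add, map_mul]; ring,
      hmul, map_one]
  have hdvdXm : (X ^ 2 - C θ * X + 1 : K[X]) ∣ X ^ m - 1 := by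
    rw [← Polynomial.map_dvd_map' (algebraMap K L), hmap]
    have d1 : (X - C ζ : L[X]) ∣ X ^ m - 1 := by
      rw [Polynomial.dvd_iff_isRoot]
      simp [Polynomial.IsRoot, hζ.pow_eq_one]
    have d2 : (X - C ζ⁻¹ : L[X]) ∣ X ^ m - 1 := by
      rw [Polynomial.dvd_iff_isRoot]
      simp [Polynomial.IsRoot, inv_pow, hζ.pow_eq_one]
    have hcop : IsCoprime (X - C ζ : L[X]) (X - C ζ⁻¹) :=
      Polynomial.isCoprime_X_sub_C_of_isUnit_sub ((sub_ne_zero.mpr hζne).isUnit)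
    have := hcop.mul_dvd d1 d2
    simpa [Polynomial.map_sub, Polynomial.map_pow, Polynomial.map_one,
      Polynomial.map_X] using this
  have hAm : Atil ^ m = 1 := by
    obtain ⟨r, hr⟩ := hdvdXm
    have := congrArg (aeval Atil) hr
    simp only [map_sub, map_pow, aeval_X, map_one, map_mul, haeval, zero_mul] at this
    rw [sub_eq_zero] at this
    exact this
  -- B part
  have hB4 : B ^ 4 = 1 := by
    subst hB
    ext i j
    fin_cases i <;> fin_cases j <;>
      simp [pow_succ, Matrix.mul_apply, Fin.sum_univ_two, Matrix.one_apply]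
  have hBinv : B⁻¹ = !![0, 1; -1, 0] := by
    apply Matrix.inv_eq_right_inv
    subst hB
    ext i j
    fin_cases i <;> fin_cases j <;>
      simp [Matrix.mul_apply, Fin.sum_univ_two, Matrix.one_apply]
  have hAinv : Atil⁻¹ = θ • (1 : Matrix (Fin 2) (Fin 2) K) - Atil := by
    apply Matrix.inv_eq_right_inv
    rw [mul_sub, mul_smul_comm, mul_one, ← pow_two, hsq]
    abel
  have hconj : B⁻¹ * Atil * B = Atil⁻¹ := by
    rw [hAinv, hBinv, hAtil', hB]
    ext i j
    fin_cases i <;> fin_cases j <;>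
      simp [Matrix.mul_apply, Fin.sum_univ_two, Matrix.one_apply]
    all_goals field_simp
    all_goals ring
  exact ⟨hAm, hB4, hconj, hminp⟩
end
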